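/- arXiv:1506.02150 — 3 statements merged into one kernel-verified Lean document; each statement's English description precedes it below -/
import Mathlib

section
/- Let $g:[0,T]\to\mathbb{R}$ be continuously differentiable with $g(t_0)=0$ for some $t_0\in[0,T]$, and suppose $g'(t)=h(t)-\delta g(t)$ for a continuous function $h$ and a constant $\delta>0$. Then for all $t\in[t_0,T]$, $|g(t)| \le \left|\int_{t_0}^t h(s)\,ds\right| + \delta \int_{t_0}^t \left|\int_{t_0}^\tau h(s)\,ds\right| e^{\delta(t-\tau)}\,d\tau$. -/
open MeasureTheory intervalIntegral

/-- Grönwall-type bound: if `g` is C¹ on `[0,T]` with `g(t₀)=0` and `g' = h - δ g`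
for continuous `h` and `δ > 0`, then for `t ∈ [t₀,T]`,
`|g(t)| ≤ |∫_{t₀}^t h| + δ ∫_{t₀}^t |∫_{t₀}^τ h| e^{δ(t-τ)} dτ`. -/
theorem stmt_1 (T t₀ δ : ℝ) (hδ : 0 < δ) (ht₀ : t₀ ∈ Set.Icc 0 T)
    (g h : ℝ → ℝ) (hh : Continuous h) (hg0 : g t₀ = 0)
    (hg : ∀ t ∈ Set.Icc (0:ℝ) T, HasDerivAt g (h t - δ * g t) t) :
    ∀ t ∈ Set.Icc t₀ T,
      |g t| ≤ |∫ s in t₀..t, h s|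
        + δ * ∫ τ in t₀..t, |∫ s in t₀..τ, h s| * Real.exp (δ * (t - τ)) := by
  intro t ht
  obtain ⟨htt₀, htT⟩ := ht
  obtain ⟨ht₀0, ht₀T⟩ := ht₀
  set H : ℝ → ℝ := fun τ => ∫ s in t₀..τ, h s with hHdef
  have HderivAt : ∀ τ : ℝ, HasDerivAt H (h τ) τ := fun τ =>
    intervalIntegral.integral_hasDerivAt_right (hh.intervalIntegrable _ _)
      (hh.stronglyMeasurableAtFilter _ _) hh.continuousAt
  have Hcont : Continuous H := by
    rw [continuous_iff_continuousAt]; exact fun τ => (HderivAt τ).continuousAt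
  have expderiv : ∀ s : ℝ, HasDerivAt (fun s => Real.exp (δ * s))
      (δ * Real.exp (δ * s)) s := by
    intro s
    have := (Real.hasDerivAt_exp (δ * s)).comp s ((hasDerivAt_id s).const_mul δ)
    simpa [mul_comm, Function.comp_def] using this
  have expcont : Continuous (fun s => Real.exp (δ * s)) :=
    Real.continuous_exp.comp (continuous_const.mul continuous_id)
  have Fderiv : ∀ s ∈ Set.uIcc t₀ t, HasDerivAt (fun s => Real.exp (δ * s) * g s)
      (Real.exp (δ * s) * h s) s := by
    intro s hs
    rw [Set.uIcc_of_le htt₀] at hs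
    have hs' : s ∈ Set.Icc (0:ℝ) T := ⟨le_trans ht₀0 hs.1, le_trans hs.2 htT⟩
    have := (expderiv s).fun_mul (hg s hs')
    refine this.congr_deriv ?_
    ring
  have key : Real.exp (δ * t) * g t = ∫ s in t₀..t, Real.exp (δ * s) * h s := by
    have e := intervalIntegral.integral_eq_sub_of_hasDerivAt Fderiv
      ((expcont.mul hh).intervalIntegrable _ _)
    rw [e, hg0, mul_zero, sub_zero]
  have ibp : (∫ s in t₀..t, Real.exp (δ * s) * h s)
      = Real.exp (δ * t) * H t - δ * ∫ s in t₀..t, Real.exp (δ * s) * H s := by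
    have e := intervalIntegral.integral_mul_deriv_eq_deriv_mul (a := t₀) (b := t)
      (u := fun s => Real.exp (δ * s)) (u' := fun s => δ * Real.exp (δ * s))
      (v := H) (v' := h)
      (fun s _ => expderiv s) (fun s _ => HderivAt s)
      ((continuous_const.mul expcont).intervalIntegrable _ _)
      (hh.intervalIntegrable _ _)
    rw [e]
    have hH0 : H t₀ = 0 := intervalIntegral.integral_same
    rw [hH0, mul_zero, sub_zero]
    simp only [mul_assoc, intervalIntegral.integral_const_mul]
  set I := ∫ s in t₀..t, Real.exp (δ * (s - t)) * H s with hI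
  set J := ∫ s in t₀..t, Real.exp (δ * s) * H s with hJ
  have hne : Real.exp (δ * t) ≠ 0 := (Real.exp_pos _).ne'
  have e2 : I = Real.exp (-(δ * t)) * J := by
    rw [hI, hJ, ← intervalIntegral.integral_const_mul]
    congr 1
    ext s
    rw [← mul_assoc, ← Real.exp_add]
    ring_nf
  have e3 : Real.exp (δ * t) * I = J := by
    rw [e2, ← mul_assoc, ← Real.exp_add]
    simp
  have gform : g t = H t - δ * I := by
    apply mul_left_cancel₀ hne
    calc Real.exp (δ * t) * g t = Real.exp (δ * t) * H t - δ * J := by rw [key, ibp]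
      _ = Real.exp (δ * t) * H t - δ * (Real.exp (δ * t) * I) := by rw [e3]
      _ = Real.exp (δ * t) * (H t - δ * I) := by ring
  rw [gform]
  have step1 : |H t - δ * ∫ s in t₀..t, Real.exp (δ * (s - t)) * H s|
      ≤ |H t| + δ * |∫ s in t₀..t, Real.exp (δ * (s - t)) * H s| := by
    calc _ ≤ |H t| + |δ * ∫ s in t₀..t, Real.exp (δ * (s - t)) * H s| := abs_sub _ _
    _ = _ := by rw [abs_mul, abs_of_pos hδ]
  refine step1.trans ?_
  gcongr
  calc |∫ s in t₀..t, Real.exp (δ * (s - t)) * H s|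
      ≤ ∫ s in t₀..t, |Real.exp (δ * (s - t)) * H s| :=
        intervalIntegral.abs_integral_le_integral_abs htt₀
    _ ≤ ∫ τ in t₀..t, |H τ| * Real.exp (δ * (t - τ)) := by
        apply intervalIntegral.integral_mono_on htt₀
        · exact (((Real.continuous_exp.comp ((continuous_const.mul
            (continuous_id.sub continuous_const))))).mul Hcont).abs.intervalIntegrable _ _
        · exact (Hcont.abs.mul (Real.continuous_exp.comp
            (continuous_const.mul (continuous_const.sub continuous_id)))).intervalIntegrable _ _
        · intro s hs
          rw [abs_mul, abs_of_pos (Real.exp_pos _)]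
          have h1 : Real.exp (δ * (s - t)) ≤ Real.exp (δ * (t - s)) :=
            Real.exp_le_exp.2 (by nlinarith [hs.2, hδ.le])
          calc Real.exp (δ * (s - t)) * |H s|
              ≤ Real.exp (δ * (t - s)) * |H s| :=
                mul_le_mul_of_nonneg_right h1 (abs_nonneg _)
            _ = |H s| * Real.exp (δ * (t - s)) := mul_comm _ _
end

section
/- With the weight $\varphi(x,t)=e^{\gamma\psi(x,t)}$, $\psi(x,t)=|x-x_0|^2-\beta((t-t_0)^2-M)$, $\sigma=s\gamma\varphi$, and $k\ge 0$: for every $w\in L^2(Q)$ with $Q=\Omega\times(0,T)$, there is a constant $C>0$ (independent of $s$ and $w$) such that $\int_Q \sigma^{2k+1}(x,t) e^{2s\varphi(x,t)} \left|\int_{t_0}^t w(x,\tau)\,d\tau\right|^2 dx\,dt \le C \int_Q \sigma^{2k}(x,t) e^{2s\varphi(x,t)} |w(x,t)|^2\, dx\,dt$. -/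
open MeasureTheory intervalIntegral

local notation "E3" => EuclideanSpace ℝ (Fin 3)

open Set ENNReal

namespace Stmt3Aux

variable {t₀ β γ M s k A : ℝ}

/-- the weight φ(x,t) with A = ‖x-x₀‖². -/
noncomputable def ph (t₀ β γ M A t : ℝ) : ℝ := Real.exp (γ * (A - β * ((t - t₀) ^ 2 - M)))

/-- σ = sγφ -/
noncomputable def sg (t₀ β γ M s A t : ℝ) : ℝ := s * γ * ph t₀ β γ M A t

/-- e^{2sφ} -/
noncomputable def ee (t₀ β γ M s A t : ℝ) : ℝ := Real.exp (2 * s * ph t₀ β γ M A t)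

lemma ph_pos (t : ℝ) : 0 < ph t₀ β γ M A t := Real.exp_pos _

lemma sg_pos (hγ : 0 < γ) (hs : 0 < s) (t : ℝ) : 0 < sg t₀ β γ M s A t :=
  mul_pos (mul_pos hs hγ) (ph_pos t)

lemma ee_pos (t : ℝ) : 0 < ee t₀ β γ M s A t := Real.exp_pos _

lemma continuous_ph : Continuous (ph t₀ β γ M A) := by
  unfold ph; fun_prop

lemma continuous_sg : Continuous (sg t₀ β γ M s A) :=
  continuous_const.mul continuous_ph

lemma continuous_ee : Continuous (ee t₀ β γ M s A) :=
  Real.continuous_exp.comp (continuous_const.mul continuous_ph)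

lemma ph_mono (hβ : 0 < β) (hγ : 0 < γ) {t τ : ℝ} (h : (τ - t₀) ^ 2 ≤ (t - t₀) ^ 2) :
    ph t₀ β γ M A t ≤ ph t₀ β γ M A τ := by
  unfold ph
  apply Real.exp_le_exp.2
  nlinarith [mul_le_mul_of_nonneg_left (mul_le_mul_of_nonneg_left h hβ.le) hγ.le]

lemma sg_mono (hβ : 0 < β) (hγ : 0 < γ) (hs : 0 < s) {t τ : ℝ}
    (h : (τ - t₀) ^ 2 ≤ (t - t₀) ^ 2) :
    sg t₀ β γ M s A t ≤ sg t₀ β γ M s A τ := by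
  unfold sg
  have := ph_mono (t₀ := t₀) (M := M) (A := A) hβ hγ h
  nlinarith [mul_le_mul_of_nonneg_left (ph_mono (t₀ := t₀) (M := M) (A := A) hβ hγ h)
    (mul_pos hs hγ).le]

lemma sq_dist_le_of_uIoc {t τ : ℝ} (h : τ ∈ Set.uIoc t₀ t) : (τ - t₀) ^ 2 ≤ (t - t₀) ^ 2 := by
  rcases le_total t₀ t with hle | hle
  · rw [Set.uIoc_of_le hle] at h
    nlinarith [h.1, h.2]
  · rw [Set.uIoc_of_ge hle] at h
    nlinarith [h.1, h.2]

lemma hasDerivAt_ee (t : ℝ) :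
    HasDerivAt (ee t₀ β γ M s A)
      (-(4 * β) * ((t - t₀) * sg t₀ β γ M s A t * ee t₀ β γ M s A t)) t := by
  have h0 : HasDerivAt (fun u : ℝ => (u - t₀) ^ 2 - M) (2 * (t - t₀)) t := by
    simpa using (((hasDerivAt_id t).sub_const t₀).pow 2).sub_const M
  have h1 := ((h0.const_mul β).const_sub A).const_mul γ
  have h2 := h1.exp
  have h3 := (h2.const_mul (2 * s)).exp
  unfold ee sg ph
  convert h3 using 1
  ring

lemma integral_D (hβ : 0 < β) (a b : ℝ) :
    ∫ t in a..b, (t - t₀) * sg t₀ β γ M s A t * ee t₀ β γ M s A t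
      = (1 / (4 * β)) * (ee t₀ β γ M s A a - ee t₀ β γ M s A b) := by
  have key : ∀ t ∈ Set.uIcc a b,
      HasDerivAt (fun u => -(1 / (4 * β)) * ee t₀ β γ M s A u)
        ((t - t₀) * sg t₀ β γ M s A t * ee t₀ β γ M s A t) t := by
    intro t _
    have h := (hasDerivAt_ee (t₀ := t₀) (β := β) (γ := γ) (M := M) (s := s) (A := A) t).const_mul
      (-(1 / (4 * β)))
    refine h.congr_deriv ?_
    rw [← mul_assoc, neg_mul_neg, one_div, inv_mul_cancel₀ (by positivity : (4:ℝ) * β ≠ 0), one_mul]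
  have hcont : IntervalIntegrable
      (fun t => (t - t₀) * sg t₀ β γ M s A t * ee t₀ β γ M s A t) volume a b := by
    apply Continuous.intervalIntegrable
    exact (continuous_id.sub continuous_const).mul continuous_sg |>.mul continuous_ee
  rw [intervalIntegral.integral_eq_sub_of_hasDerivAt key hcont]
  ring

/-- Cauchy-Schwarz for lintegrals. -/
lemma cs {α : Type*} [MeasurableSpace α] {ν : Measure α} {f : α → ℝ≥0∞}
    (hf : AEMeasurable f ν) :
    (∫⁻ a, f a ∂ν) ^ 2 ≤ ν Set.univ * ∫⁻ a, (f a) ^ 2 ∂ν := by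
  have hpq : Real.HolderConjugate 2 2 := Real.HolderConjugate.two_two
  have h := ENNReal.lintegral_mul_le_Lp_mul_Lq ν hpq (aemeasurable_const (b := (1:ℝ≥0∞))) hf
  simp only [Pi.mul_apply, one_mul] at h
  calc (∫⁻ a, f a ∂ν) ^ 2
      ≤ ((∫⁻ _, (1:ℝ≥0∞) ^ (2:ℝ) ∂ν) ^ (1/(2:ℝ)) * (∫⁻ a, f a ^ (2:ℝ) ∂ν) ^ (1/(2:ℝ))) ^ 2 :=
        pow_le_pow_left' h 2
    _ = ν Set.univ * ∫⁻ a, (f a) ^ 2 ∂ν := by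
        have hsq : ∀ x : ℝ≥0∞, (x ^ (1/(2:ℝ))) ^ 2 = x := fun x => by
          rw [← ENNReal.rpow_natCast _ 2, ← ENNReal.rpow_mul]; norm_num
        rw [mul_pow, hsq, hsq]
        simp only [ENNReal.one_rpow, lintegral_one]
        congr 1
        refine lintegral_congr fun a => ?_
        rw [← ENNReal.rpow_natCast (f a) 2]
        norm_num

variable {T : ℝ}

lemma oneD (hβ : 0 < β) (hγ : 0 < γ) (hs : 0 < s) (hk : 0 ≤ k)
    (hT : 0 < T) (ht₀ : t₀ ∈ Set.Ioo 0 T) {v : ℝ → ℝ}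
    (hv : AEMeasurable v (volume.restrict (Set.Ioc 0 T))) :
    (∫⁻ t in Set.Ioc 0 T,
        ENNReal.ofReal ((sg t₀ β γ M s A t) ^ (2*k+1) * ee t₀ β γ M s A t)
          * (‖∫ τ in Set.uIoc t₀ t, v τ‖₊ : ℝ≥0∞) ^ 2)
      ≤ ENNReal.ofReal (1/(4*β)) *
        ∫⁻ t in Set.Ioc 0 T,
          ENNReal.ofReal ((sg t₀ β γ M s A t) ^ (2*k) * ee t₀ β γ M s A t)
            * (‖v t‖₊ : ℝ≥0∞) ^ 2 := by
  set Gg : ℝ → ℝ≥0∞ := fun τ =>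
    ENNReal.ofReal ((sg t₀ β γ M s A τ) ^ (2*k)) * (‖v τ‖₊ : ℝ≥0∞) ^ 2 with hGg
  set Dd : ℝ → ℝ := fun t => |t - t₀| * sg t₀ β γ M s A t * ee t₀ β γ M s A t with hDd
  set S : Set (ℝ × ℝ) := {p : ℝ × ℝ | p.2 ∈ Set.uIoc t₀ p.1} with hS
  have hSm : MeasurableSet S := by
    have : S = {p : ℝ × ℝ | min t₀ p.1 < p.2} ∩ {p : ℝ × ℝ | p.2 ≤ max t₀ p.1} := rfl
    rw [this]
    exact (measurableSet_lt (measurable_const.min measurable_fst) measurable_snd).inter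
      (measurableSet_le measurable_snd (measurable_const.max measurable_fst))
  have hsub : ∀ t ∈ Set.Ioc 0 T, Set.uIoc t₀ t ⊆ Set.Ioc 0 T := by
    intro t ht τ hτ
    rw [Set.uIoc] at hτ
    refine ⟨lt_of_le_of_lt (le_min ht₀.1.le ht.1.le) hτ.1, hτ.2.trans (max_le ht₀.2.le ht.2)⟩
  have hGgm : AEMeasurable Gg (volume.restrict (Set.Ioc 0 T)) := by
    exact ((ENNReal.measurable_ofReal.comp
      ((continuous_sg.rpow_const (fun _ => Or.inr (by linarith))).measurable)).aemeasurable).mul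
      (hv.enorm.pow_const 2)
  have hDdm : Measurable fun t => ENNReal.ofReal (Dd t) := by
    refine ENNReal.measurable_ofReal.comp ?_
    exact (((continuous_id.sub continuous_const).abs.mul continuous_sg).mul
      continuous_ee).measurable
  -- step 1 : pointwise bound for fixed t
  have step1 : ∀ t ∈ Set.Ioc 0 T,
      ENNReal.ofReal ((sg t₀ β γ M s A t) ^ (2*k+1) * ee t₀ β γ M s A t)
          * (‖∫ τ in Set.uIoc t₀ t, v τ‖₊ : ℝ≥0∞) ^ 2
        ≤ ∫⁻ τ in Set.Ioc 0 T,
            S.indicator (fun p => ENNReal.ofReal (Dd p.1) * Gg p.2) (t, τ) := by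
    intro t ht
    have hJm : MeasurableSet (Set.uIoc t₀ t) := measurableSet_uIoc
    have hJsub := hsub t ht
    have hmeas : AEMeasurable (fun τ => (‖v τ‖₊ : ℝ≥0∞)) (volume.restrict (Set.uIoc t₀ t)) := by
      have h := (hv.enorm).restrict (s := Set.uIoc t₀ t)
      rwa [Measure.restrict_restrict hJm, Set.inter_eq_self_of_subset_left hJsub] at h
    have hnorm : (‖∫ τ in Set.uIoc t₀ t, v τ‖₊ : ℝ≥0∞)
        ≤ ∫⁻ τ in Set.uIoc t₀ t, ‖v τ‖₊ := enorm_integral_le_lintegral_enorm _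
    have hcs := cs hmeas
    have hvol : (volume.restrict (Set.uIoc t₀ t)) Set.univ = ENNReal.ofReal |t - t₀| := by
      rw [Measure.restrict_apply_univ, Set.uIoc, Real.volume_Ioc, max_sub_min_eq_abs,
        abs_sub_comm]
    rw [hvol] at hcs
    have hw1 : (0:ℝ) ≤ (sg t₀ β γ M s A t) ^ (2*k+1) * ee t₀ β γ M s A t := by
      have := sg_pos (t₀ := t₀) (β := β) (M := M) (A := A) hγ hs t
      have := ee_pos (t₀ := t₀) (β := β) (γ := γ) (M := M) (s := s) (A := A) t
      positivity
    calc ENNReal.ofReal ((sg t₀ β γ M s A t) ^ (2*k+1) * ee t₀ β γ M s A t)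
          * (‖∫ τ in Set.uIoc t₀ t, v τ‖₊ : ℝ≥0∞) ^ 2
        ≤ ENNReal.ofReal ((sg t₀ β γ M s A t) ^ (2*k+1) * ee t₀ β γ M s A t)
          * (ENNReal.ofReal |t - t₀| * ∫⁻ τ in Set.uIoc t₀ t, (‖v τ‖₊ : ℝ≥0∞) ^ 2) := by
          exact mul_le_mul_right ((pow_le_pow_left' hnorm 2).trans hcs) _
      _ = ∫⁻ τ in Set.uIoc t₀ t,
            ENNReal.ofReal ((sg t₀ β γ M s A t) ^ (2*k+1) * ee t₀ β γ M s A t * |t - t₀|)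
              * (‖v τ‖₊ : ℝ≥0∞) ^ 2 := by
          rw [← mul_assoc, ← ENNReal.ofReal_mul hw1,
            ← lintegral_const_mul' _ _ ENNReal.ofReal_ne_top]
      _ ≤ ∫⁻ τ in Set.uIoc t₀ t, ENNReal.ofReal (Dd t) * Gg τ := by
          refine lintegral_mono_ae ((ae_restrict_iff' hJm).2 (ae_of_all _ fun τ hτ => ?_))
          rw [hGg, ← mul_assoc, ← ENNReal.ofReal_mul (by
            have := sg_pos (t₀ := t₀) (β := β) (M := M) (A := A) hγ hs t
            have := ee_pos (t₀ := t₀) (β := β) (γ := γ) (M := M) (s := s) (A := A) t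
            have : (0:ℝ) ≤ |t - t₀| := abs_nonneg _
            positivity)]
          refine mul_le_mul_left (ENNReal.ofReal_le_ofReal ?_) _
          have hmono : (sg t₀ β γ M s A t) ^ (2*k) ≤ (sg t₀ β γ M s A τ) ^ (2*k) :=
            Real.rpow_le_rpow (sg_pos hγ hs t).le
              (sg_mono hβ hγ hs (sq_dist_le_of_uIoc hτ)) (by linarith)
          have hsplit : (sg t₀ β γ M s A t) ^ (2*k+1)
              = (sg t₀ β γ M s A t) ^ (2*k) * sg t₀ β γ M s A t := by
            rw [Real.rpow_add (sg_pos hγ hs t), Real.rpow_one]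
          rw [hsplit, hDd]
          have h1 : (0:ℝ) ≤ sg t₀ β γ M s A t * ee t₀ β γ M s A t * |t - t₀| := by
            have := sg_pos (t₀ := t₀) (β := β) (M := M) (A := A) hγ hs t
            have := ee_pos (t₀ := t₀) (β := β) (γ := γ) (M := M) (s := s) (A := A) t
            have : (0:ℝ) ≤ |t - t₀| := abs_nonneg _
            positivity
          beta_reduce
          nlinarith [mul_le_mul_of_nonneg_right hmono h1]
      _ = ∫⁻ τ in Set.Ioc 0 T,
            S.indicator (fun p => ENNReal.ofReal (Dd p.1) * Gg p.2) (t, τ) := by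
          have hone : ∀ τ, S.indicator (fun p => ENNReal.ofReal (Dd p.1) * Gg p.2) (t, τ)
              = (Set.uIoc t₀ t).indicator (fun τ => ENNReal.ofReal (Dd t) * Gg τ) τ := by
            intro τ
            by_cases h : τ ∈ Set.uIoc t₀ t <;>
              simp [Set.indicator_apply, hS, h]
          simp_rw [hone]
          rw [lintegral_indicator hJm, Measure.restrict_restrict hJm,
            Set.inter_eq_self_of_subset_left hJsub]
  have hH : AEMeasurable
      (Function.uncurry fun t τ => S.indicator (fun p => ENNReal.ofReal (Dd p.1) * Gg p.2) (t, τ))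
      ((volume.restrict (Set.Ioc 0 T)).prod (volume.restrict (Set.Ioc 0 T))) := by
    have : (Function.uncurry fun t τ =>
        S.indicator (fun p => ENNReal.ofReal (Dd p.1) * Gg p.2) (t, τ))
        = S.indicator (fun p => ENNReal.ofReal (Dd p.1) * Gg p.2) := by
      ext p; rfl
    rw [this]
    exact (((hDdm.comp measurable_fst).aemeasurable).mul hGgm.comp_snd).indicator hSm
  have step2 : (∫⁻ t in Set.Ioc 0 T,
        ENNReal.ofReal ((sg t₀ β γ M s A t) ^ (2*k+1) * ee t₀ β γ M s A t)
          * (‖∫ τ in Set.uIoc t₀ t, v τ‖₊ : ℝ≥0∞) ^ 2)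
      ≤ ∫⁻ τ in Set.Ioc 0 T, ∫⁻ t in Set.Ioc 0 T,
          S.indicator (fun p => ENNReal.ofReal (Dd p.1) * Gg p.2) (t, τ) := by
    refine (lintegral_mono_ae ((ae_restrict_iff' measurableSet_Ioc).2
      (ae_of_all _ step1))).trans_eq ?_
    exact lintegral_lintegral_swap hH
  have step3 : ∀ τ ∈ Set.Ioc 0 T,
      (∫⁻ t in Set.Ioc 0 T, S.indicator (fun p => ENNReal.ofReal (Dd p.1) * Gg p.2) (t, τ))
        ≤ ENNReal.ofReal (1/(4*β)) *
          (ENNReal.ofReal ((sg t₀ β γ M s A τ) ^ (2*k) * ee t₀ β γ M s A τ)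
            * (‖v τ‖₊ : ℝ≥0∞) ^ 2) := by
    intro τ hτ
    set K : Set ℝ := {t | τ ∈ Set.uIoc t₀ t} with hK
    have hKm : MeasurableSet K := by
      have : K = (fun t => min t₀ t) ⁻¹' (Set.Iio τ) ∩ (fun t => max t₀ t) ⁻¹' (Set.Ici τ) := by
        ext t; simp [hK, Set.uIoc, Set.mem_Ioc, and_comm]
      rw [this]
      exact ((measurable_const.min measurable_id) measurableSet_Iio).inter
        ((measurable_const.max measurable_id) measurableSet_Ici)
    have hind : ∀ t, S.indicator (fun p => ENNReal.ofReal (Dd p.1) * Gg p.2) (t, τ)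
        = K.indicator (fun t => ENNReal.ofReal (Dd t)) t * Gg τ := by
      intro t
      by_cases h : τ ∈ Set.uIoc t₀ t <;> simp [Set.indicator_apply, hS, hK, h]
    have hGfin : Gg τ ≠ ∞ :=
      ENNReal.mul_ne_top ENNReal.ofReal_ne_top (by
        exact ENNReal.pow_ne_top ENNReal.coe_ne_top)
    have hkey : (∫⁻ t in K ∩ Set.Ioc 0 T, ENNReal.ofReal (Dd t))
        ≤ ENNReal.ofReal (1/(4*β) * ee t₀ β γ M s A τ) := by
      rcases le_or_gt τ t₀ with hcase | hcase
      · -- τ ≤ t₀, the relevant t are below τ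
        have hss : K ∩ Set.Ioc 0 T ⊆ Set.Icc 0 τ := by
          rintro t ⟨htK, htI⟩
          rw [hK, Set.mem_setOf_eq, Set.uIoc, Set.mem_Ioc] at htK
          have ht2 : t < τ := by
            rcases lt_or_ge t τ with h' | h'
            · exact h'
            · exfalso
              have : τ ≤ t₀ ⊓ t := le_inf hcase h'
              linarith [htK.1]
          exact ⟨htI.1.le, ht2.le⟩
        have hcongr : ∫⁻ t in Set.Icc 0 τ, ENNReal.ofReal (Dd t)
            = ∫⁻ t in Set.Icc 0 τ,
                ENNReal.ofReal (-((t - t₀) * sg t₀ β γ M s A t * ee t₀ β γ M s A t)) := by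
          refine setLIntegral_congr_fun_ae measurableSet_Icc (ae_of_all _ fun t htt => ?_)
          rw [hDd]
          beta_reduce
          rw [abs_of_nonpos (by linarith [htt.2] : t - t₀ ≤ 0)]
          ring_nf
        have hInt : IntegrableOn
            (fun t => -((t - t₀) * sg t₀ β γ M s A t * ee t₀ β γ M s A t))
            (Set.Icc 0 τ) volume := by
          apply Continuous.integrableOn_Icc
          exact (((continuous_id.sub continuous_const).mul continuous_sg).mul continuous_ee).neg
        have hnn : 0 ≤ᵐ[volume.restrict (Set.Icc 0 τ)]
            fun t => -((t - t₀) * sg t₀ β γ M s A t * ee t₀ β γ M s A t) := by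
          refine (ae_restrict_iff' measurableSet_Icc).2 (ae_of_all _ fun t htt => ?_)
          have h1 := sg_pos (t₀ := t₀) (β := β) (M := M) (A := A) hγ hs t
          have h2 := ee_pos (t₀ := t₀) (β := β) (γ := γ) (M := M) (s := s) (A := A) t
          have h3 : (0:ℝ) ≤ t₀ - t := by linarith [htt.2]
          simp only [Pi.zero_apply]
          nlinarith [mul_nonneg (mul_nonneg h3 h1.le) h2.le]
        calc (∫⁻ t in K ∩ Set.Ioc 0 T, ENNReal.ofReal (Dd t))
            ≤ ∫⁻ t in Set.Icc 0 τ, ENNReal.ofReal (Dd t) := lintegral_mono_set hss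
          _ = ENNReal.ofReal (∫ t in Set.Icc 0 τ,
                -((t - t₀) * sg t₀ β γ M s A t * ee t₀ β γ M s A t)) := by
              rw [hcongr, ← ofReal_integral_eq_lintegral_ofReal hInt hnn]
          _ ≤ ENNReal.ofReal (1/(4*β) * ee t₀ β γ M s A τ) := by
              apply ENNReal.ofReal_le_ofReal
              rw [MeasureTheory.integral_Icc_eq_integral_Ioc,
                ← intervalIntegral.integral_of_le hτ.1.le, intervalIntegral.integral_neg,
                integral_D hβ 0 τ]
              have h0 := ee_pos (t₀ := t₀) (β := β) (γ := γ) (M := M) (s := s) (A := A) 0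
              have h4 : (0:ℝ) < 1/(4*β) := by positivity
              nlinarith
      · -- t₀ < τ, the relevant t are above τ
        have hss : K ∩ Set.Ioc 0 T ⊆ Set.Icc τ T := by
          rintro t ⟨htK, htI⟩
          rw [hK, Set.mem_setOf_eq, Set.uIoc, Set.mem_Ioc] at htK
          have ht2 : τ ≤ t := by
            rcases le_or_gt τ t with h' | h'
            · exact h'
            · exfalso
              have : t₀ ⊔ t < τ := sup_lt_iff.2 ⟨hcase, h'⟩
              linarith [htK.2]
          exact ⟨ht2, htI.2⟩
        have hτT : τ ≤ T := hτ.2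
        have hcongr : ∫⁻ t in Set.Icc τ T, ENNReal.ofReal (Dd t)
            = ∫⁻ t in Set.Icc τ T,
                ENNReal.ofReal ((t - t₀) * sg t₀ β γ M s A t * ee t₀ β γ M s A t) := by
          refine setLIntegral_congr_fun_ae measurableSet_Icc (ae_of_all _ fun t htt => ?_)
          rw [hDd]
          beta_reduce
          rw [abs_of_nonneg (by linarith [htt.1] : (0:ℝ) ≤ t - t₀)]
        have hInt : IntegrableOn
            (fun t => (t - t₀) * sg t₀ β γ M s A t * ee t₀ β γ M s A t)
            (Set.Icc τ T) volume := by
          apply Continuous.integrableOn_Icc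
          exact ((continuous_id.sub continuous_const).mul continuous_sg).mul continuous_ee
        have hnn : 0 ≤ᵐ[volume.restrict (Set.Icc τ T)]
            fun t => (t - t₀) * sg t₀ β γ M s A t * ee t₀ β γ M s A t := by
          refine (ae_restrict_iff' measurableSet_Icc).2 (ae_of_all _ fun t htt => ?_)
          have h1 := sg_pos (t₀ := t₀) (β := β) (M := M) (A := A) hγ hs t
          have h2 := ee_pos (t₀ := t₀) (β := β) (γ := γ) (M := M) (s := s) (A := A) t
          have h3 : (0:ℝ) ≤ t - t₀ := by linarith [htt.1]
          simp only [Pi.zero_apply]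
          nlinarith [mul_nonneg (mul_nonneg h3 h1.le) h2.le]
        calc (∫⁻ t in K ∩ Set.Ioc 0 T, ENNReal.ofReal (Dd t))
            ≤ ∫⁻ t in Set.Icc τ T, ENNReal.ofReal (Dd t) := lintegral_mono_set hss
          _ = ENNReal.ofReal (∫ t in Set.Icc τ T,
                (t - t₀) * sg t₀ β γ M s A t * ee t₀ β γ M s A t) := by
              rw [hcongr, ← ofReal_integral_eq_lintegral_ofReal hInt hnn]
          _ ≤ ENNReal.ofReal (1/(4*β) * ee t₀ β γ M s A τ) := by
              apply ENNReal.ofReal_le_ofReal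
              rw [MeasureTheory.integral_Icc_eq_integral_Ioc,
                ← intervalIntegral.integral_of_le hτT, integral_D hβ τ T]
              have h0 := ee_pos (t₀ := t₀) (β := β) (γ := γ) (M := M) (s := s) (A := A) T
              have h4 : (0:ℝ) < 1/(4*β) := by positivity
              nlinarith
    calc (∫⁻ t in Set.Ioc 0 T, S.indicator (fun p => ENNReal.ofReal (Dd p.1) * Gg p.2) (t, τ))
        = (∫⁻ t in K ∩ Set.Ioc 0 T, ENNReal.ofReal (Dd t)) * Gg τ := by
          simp_rw [hind]
          rw [lintegral_mul_const' _ _ hGfin, lintegral_indicator hKm,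
            Measure.restrict_restrict hKm]
      _ ≤ ENNReal.ofReal (1/(4*β) * ee t₀ β γ M s A τ) * Gg τ := mul_le_mul_left hkey _
      _ = ENNReal.ofReal (1/(4*β)) *
          (ENNReal.ofReal ((sg t₀ β γ M s A τ) ^ (2*k) * ee t₀ β γ M s A τ)
            * (‖v τ‖₊ : ℝ≥0∞) ^ 2) := by
          rw [hGg]
          beta_reduce
          rw [ENNReal.ofReal_mul (by positivity),
            ENNReal.ofReal_mul (by
              have := sg_pos (t₀ := t₀) (β := β) (M := M) (A := A) hγ hs τ
              positivity)]
          ring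
  refine step2.trans ?_
  refine (lintegral_mono_ae ((ae_restrict_iff' measurableSet_Ioc).2
    (ae_of_all _ step3))).trans_eq ?_
  exact lintegral_const_mul' _ _ ENNReal.ofReal_ne_top

lemma uIoc_subset_Ioc {T t : ℝ} (ht₀ : t₀ ∈ Set.Ioo 0 T) (ht : t ∈ Set.Ioc 0 T) :
    Set.uIoc t₀ t ⊆ Set.Ioc 0 T := by
  intro τ hτ
  rw [Set.uIoc] at hτ
  exact ⟨lt_of_le_of_lt (le_min ht₀.1.le ht.1.le) hτ.1, hτ.2.trans (max_le ht₀.2.le ht.2)⟩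

lemma ennnorm_weight_sq {c F : ℝ} (hc : 0 ≤ c) :
    (‖c * |F| ^ 2‖₊ : ℝ≥0∞) = ENNReal.ofReal c * (‖F‖₊ : ℝ≥0∞) ^ 2 := by
  rw [← enorm_eq_nnnorm, ← enorm_eq_nnnorm, Real.enorm_eq_ofReal_abs, abs_of_nonneg (by positivity),
    ENNReal.ofReal_mul hc, ENNReal.ofReal_pow (abs_nonneg F), ← Real.enorm_eq_ofReal_abs]

lemma ofReal_weight_sq {c F : ℝ} (hc : 0 ≤ c) :
    ENNReal.ofReal (c * |F| ^ 2) = ENNReal.ofReal c * (‖F‖₊ : ℝ≥0∞) ^ 2 := by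
  rw [← enorm_eq_nnnorm, ENNReal.ofReal_mul hc, ENNReal.ofReal_pow (abs_nonneg F), ← Real.enorm_eq_ofReal_abs]

lemma ph_le_bound (hβ : 0 < β) (hγ : 0 < γ) {A B : ℝ} (hAB : A ≤ B) (t : ℝ) :
    ph t₀ β γ M A t ≤ Real.exp (γ * (B + β * M)) := by
  apply Real.exp_le_exp.2
  nlinarith [mul_le_mul_of_nonneg_left hAB hγ.le, mul_nonneg (mul_nonneg hγ.le hβ.le) (sq_nonneg (t - t₀))]

end Stmt3Aux


open Stmt3Aux in
/-- Lemma 2.5: with `ψ(x,t) = |x-x₀|² - β((t-t₀)² - M)`, `φ = e^{γψ}`, `σ = sγφ`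
and `k ≥ 0`, there is `C > 0` (independent of `s` and `w`) such that
`∫_Q σ^{2k+1} e^{2sφ} |∫_{t₀}^t w|² ≤ C ∫_Q σ^{2k} e^{2sφ} |w|²`. -/
theorem stmt_3 (Ω : Set E3) (hΩo : IsOpen Ω) (hΩb : Bornology.IsBounded Ω)
    (x₀ : E3) (hx₀ : x₀ ∉ closure Ω)
    (T t₀ β γ M k : ℝ) (hT : 0 < T) (ht₀ : t₀ ∈ Set.Ioo 0 T)
    (hβ : 0 < β) (hγ : 0 < γ) (hM : 0 < M) (hk : 0 ≤ k) :
    ∃ C > 0, ∀ s > 0, ∀ w : E3 → ℝ → ℝ,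
      MemLp (fun p : E3 × ℝ => w p.1 p.2) 2
        ((volume.restrict Ω).prod (volume.restrict (Set.Ioc 0 T))) →
      (∫ t in (0:ℝ)..T, ∫ x in Ω,
          (s * γ * Real.exp (γ * (‖x - x₀‖ ^ 2 - β * ((t - t₀) ^ 2 - M)))) ^ (2 * k + 1) *
            Real.exp (2 * s * Real.exp (γ * (‖x - x₀‖ ^ 2 - β * ((t - t₀) ^ 2 - M)))) *
            |∫ τ in t₀..t, w x τ| ^ 2)
        ≤ C * ∫ t in (0:ℝ)..T, ∫ x in Ω,
            (s * γ * Real.exp (γ * (‖x - x₀‖ ^ 2 - β * ((t - t₀) ^ 2 - M)))) ^ (2 * k) *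
              Real.exp (2 * s * Real.exp (γ * (‖x - x₀‖ ^ 2 - β * ((t - t₀) ^ 2 - M)))) *
              |w x t| ^ 2 := by
  classical
  refine ⟨1 / (4 * β), by positivity, ?_⟩
  intro s hs w hw
  have htwok : (0:ℝ) ≤ 2 * k := by linarith
  have htwok1 : (0:ℝ) ≤ 2 * k + 1 := by linarith
  have hΩm : MeasurableSet Ω := hΩo.measurableSet
  set μΩ : Measure E3 := volume.restrict Ω with hμΩ
  set μT : Measure ℝ := volume.restrict (Set.Ioc 0 T) with hμT
  set g : E3 × ℝ → ℝ := hw.1.mk _ with hgdef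
  have hg : StronglyMeasurable g := hw.1.stronglyMeasurable_mk
  have heq : (fun p : E3 × ℝ => w p.1 p.2) =ᵐ[μΩ.prod μT] g := hw.1.ae_eq_mk
  have hwg : MemLp g 2 (μΩ.prod μT) := hw.ae_eq heq
  -- change the goal to `sg`/`ee` form
  show (∫ t in (0:ℝ)..T, ∫ x in Ω,
      sg t₀ β γ M s (‖x - x₀‖ ^ 2) t ^ (2 * k + 1) * ee t₀ β γ M s (‖x - x₀‖ ^ 2) t *
        |∫ τ in t₀..t, w x τ| ^ 2)
    ≤ 1 / (4 * β) * ∫ t in (0:ℝ)..T, ∫ x in Ω,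
        sg t₀ β γ M s (‖x - x₀‖ ^ 2) t ^ (2 * k) * ee t₀ β γ M s (‖x - x₀‖ ^ 2) t *
          |w x t| ^ 2
  -- a.e. section equalities
  have hsec : ∀ᵐ x ∂μΩ, ∀ᵐ t ∂μT, w x t = g (x, t) := Measure.ae_ae_of_ae_prod heq
  have hsec2 : ∀ᵐ t ∂μT, ∀ᵐ x ∂μΩ, w x t = g (x, t) := by
    have hq := (Measure.measurePreserving_swap (μ := μT) (ν := μΩ)).quasiMeasurePreserving
    exact Measure.ae_ae_of_ae_prod (hq.tendsto_ae.eventually heq)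
  have hFae : ∀ᵐ x ∂μΩ, ∀ t ∈ Set.Ioc 0 T,
      (∫ τ in t₀..t, w x τ) = ∫ τ in t₀..t, g (x, τ) := by
    filter_upwards [hsec] with x hx
    intro t ht
    apply intervalIntegral.integral_congr_ae
    exact ae_imp_of_ae_restrict
      (ae_restrict_of_ae_restrict_of_subset (uIoc_subset_Ioc ht₀ ht) hx)
  -- replace `w` by `g` in both sides
  have hLHSeq : (∫ t in (0:ℝ)..T, ∫ x in Ω,
      sg t₀ β γ M s (‖x - x₀‖ ^ 2) t ^ (2 * k + 1) * ee t₀ β γ M s (‖x - x₀‖ ^ 2) t *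
        |∫ τ in t₀..t, w x τ| ^ 2)
      = ∫ t in (0:ℝ)..T, ∫ x in Ω,
      sg t₀ β γ M s (‖x - x₀‖ ^ 2) t ^ (2 * k + 1) * ee t₀ β γ M s (‖x - x₀‖ ^ 2) t *
        |∫ τ in t₀..t, g (x, τ)| ^ 2 := by
    rw [intervalIntegral.integral_of_le hT.le, intervalIntegral.integral_of_le hT.le]
    refine setIntegral_congr_ae measurableSet_Ioc (ae_of_all _ fun t ht => ?_)
    refine integral_congr_ae ?_
    filter_upwards [hFae] with x hx
    rw [hx t ht]
  have hRHSeq : (∫ t in (0:ℝ)..T, ∫ x in Ω,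
      sg t₀ β γ M s (‖x - x₀‖ ^ 2) t ^ (2 * k) * ee t₀ β γ M s (‖x - x₀‖ ^ 2) t *
        |w x t| ^ 2)
      = ∫ t in (0:ℝ)..T, ∫ x in Ω,
      sg t₀ β γ M s (‖x - x₀‖ ^ 2) t ^ (2 * k) * ee t₀ β γ M s (‖x - x₀‖ ^ 2) t *
        |g (x, t)| ^ 2 := by
    rw [intervalIntegral.integral_of_le hT.le, intervalIntegral.integral_of_le hT.le]
    refine setIntegral_congr_ae measurableSet_Ioc ?_
    have h2 : ∀ᵐ t ∂volume, (∀ᵐ x ∂μΩ, w x t = g (x, t)) ∨ t ∉ Set.Ioc 0 T := by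
      have := ae_imp_of_ae_restrict (μ := volume) (s := Set.Ioc 0 T) (by rw [← hμT]; exact hsec2)
      filter_upwards [this] with t ht
      by_cases h : t ∈ Set.Ioc 0 T
      · exact Or.inl (ht h)
      · exact Or.inr h
    filter_upwards [h2] with t ht htIoc
    rcases ht with ht | ht
    · refine integral_congr_ae ?_
      filter_upwards [ht] with x hx
      rw [hx]
    · exact absurd htIoc ht
  -- the primitive, jointly measurably
  set U : Set ((E3 × ℝ) × ℝ) := {q | q.2 ∈ Set.uIoc t₀ q.1.2} with hU
  have hUm : MeasurableSet U := by
    have : U = {q : (E3 × ℝ) × ℝ | min t₀ q.1.2 < q.2} ∩ {q | q.2 ≤ max t₀ q.1.2} := rfl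
    rw [this]
    exact (measurableSet_lt (measurable_const.min measurable_fst.snd) measurable_snd).inter
      (measurableSet_le measurable_snd (measurable_const.max measurable_fst.snd))
  set P : E3 × ℝ → ℝ := fun p => ∫ τ, U.indicator (fun q => g (q.1.1, q.2)) (p, τ) ∂μT
    with hPdef
  have hPm : StronglyMeasurable P := by
    apply StronglyMeasurable.integral_prod_right'
    exact (hg.comp_measurable (measurable_fst.fst.prodMk measurable_snd)).indicator hUm
  have hPrel : ∀ x : E3, ∀ t ∈ Set.Ioc 0 T, P (x, t) = ∫ τ in Set.uIoc t₀ t, g (x, τ) := by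
    intro x t ht
    have hfun : (fun τ => U.indicator (fun q => g (q.1.1, q.2)) ((x, t), τ))
        = (Set.uIoc t₀ t).indicator (fun τ => g (x, τ)) := by
      ext τ
      by_cases h : τ ∈ Set.uIoc t₀ t <;> simp [Set.indicator_apply, hU, h]
    rw [hPdef]
    beta_reduce
    rw [hfun, MeasureTheory.integral_indicator measurableSet_uIoc, hμT,
      Measure.restrict_restrict measurableSet_uIoc,
      Set.inter_eq_self_of_subset_left (uIoc_subset_Ioc ht₀ ht)]
  have habsP : ∀ x : E3, ∀ t ∈ Set.Ioc 0 T,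
      (‖(∫ τ in t₀..t, g (x, τ))‖₊ : ℝ≥0∞) = (‖P (x, t)‖₊ : ℝ≥0∞) := by
    intro x t ht
    rw [← enorm_eq_nnnorm, ← enorm_eq_nnnorm, Real.enorm_eq_ofReal_abs, Real.enorm_eq_ofReal_abs,
      intervalIntegral.abs_intervalIntegral_eq, hPrel x t ht]
  -- continuity of the weights
  have hphc : Continuous fun p : ℝ × E3 => ph t₀ β γ M (‖p.2 - x₀‖ ^ 2) p.1 := by
    unfold Stmt3Aux.ph; fun_prop
  have hsgc : Continuous fun p : ℝ × E3 => sg t₀ β γ M s (‖p.2 - x₀‖ ^ 2) p.1 :=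
    continuous_const.mul hphc
  have heec : Continuous fun p : ℝ × E3 => ee t₀ β γ M s (‖p.2 - x₀‖ ^ 2) p.1 :=
    Real.continuous_exp.comp (continuous_const.mul hphc)
  -- the two ENNReal integrands
  set ℓE : ℝ → E3 → ℝ≥0∞ := fun t x =>
    ENNReal.ofReal (sg t₀ β γ M s (‖x - x₀‖ ^ 2) t ^ (2 * k + 1) *
      ee t₀ β γ M s (‖x - x₀‖ ^ 2) t) * (‖P (x, t)‖₊ : ℝ≥0∞) ^ 2 with hℓE
  set rE : ℝ → E3 → ℝ≥0∞ := fun t x =>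
    ENNReal.ofReal (sg t₀ β γ M s (‖x - x₀‖ ^ 2) t ^ (2 * k) *
      ee t₀ β γ M s (‖x - x₀‖ ^ 2) t) * (‖g (x, t)‖₊ : ℝ≥0∞) ^ 2 with hrE
  have hℓEmeas : Measurable (Function.uncurry ℓE) := by
    apply Measurable.fun_mul
    · exact ENNReal.measurable_ofReal.comp
        ((hsgc.rpow_const fun p => Or.inr htwok1).mul heec).measurable
    · exact ((hPm.measurable.comp (measurable_snd.prodMk measurable_fst)).enorm).pow_const 2
  have hrEmeas : Measurable (Function.uncurry rE) := by
    apply Measurable.fun_mul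
    · exact ENNReal.measurable_ofReal.comp
        ((hsgc.rpow_const fun p => Or.inr htwok).mul heec).measurable
    · exact ((hg.measurable.comp (measurable_snd.prodMk measurable_fst)).enorm).pow_const 2
  have hℓEm : AEMeasurable (Function.uncurry ℓE) (μT.prod μΩ) := hℓEmeas.aemeasurable
  have hrEm : AEMeasurable (Function.uncurry rE) (μT.prod μΩ) := hrEmeas.aemeasurable
  -- the core estimate
  have key : (∫⁻ t, ∫⁻ x, ℓE t x ∂μΩ ∂μT)
      ≤ ENNReal.ofReal (1 / (4 * β)) * ∫⁻ t, ∫⁻ x, rE t x ∂μΩ ∂μT := by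
    rw [lintegral_lintegral_swap hℓEm, lintegral_lintegral_swap hrEm,
      ← lintegral_const_mul' _ _ ENNReal.ofReal_ne_top]
    refine lintegral_mono fun x => ?_
    have hv : AEMeasurable (fun τ => g (x, τ)) (volume.restrict (Set.Ioc 0 T)) :=
      (hg.measurable.comp measurable_prodMk_left).aemeasurable
    have h1 := oneD (t₀ := t₀) (β := β) (γ := γ) (M := M) (s := s) (k := k)
      (A := ‖x - x₀‖ ^ 2) (T := T) hβ hγ hs hk hT ht₀ hv
    refine le_trans (le_of_eq ?_) (h1.trans (le_of_eq ?_))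
    · rw [hμT]
      refine setLIntegral_congr_fun_ae measurableSet_Ioc (ae_of_all _ fun t ht => ?_)
      rw [hℓE]
      beta_reduce
      rw [hPrel x t ht]
    · rw [hμT]
  -- finiteness of the right-hand side
  obtain ⟨r, hr⟩ := hΩb.subset_closedBall x₀
  set B : ℝ := max r 0 ^ 2 with hB
  have hAB : ∀ x ∈ Ω, ‖x - x₀‖ ^ 2 ≤ B := by
    intro x hx
    have h1 : ‖x - x₀‖ ≤ max r 0 := by
      have := hr hx
      rw [Metric.mem_closedBall, dist_eq_norm] at this
      exact this.trans (le_max_left _ _)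
    exact pow_le_pow_left₀ (norm_nonneg _) h1 2
  set Φ : ℝ := Real.exp (γ * (B + β * M)) with hΦ
  have hΦpos : 0 < Φ := Real.exp_pos _
  set Kc : ℝ := (s * γ * Φ) ^ (2 * k) * Real.exp (2 * s * Φ) with hKc
  have hwt : ∀ x ∈ Ω, ∀ t : ℝ,
      sg t₀ β γ M s (‖x - x₀‖ ^ 2) t ^ (2 * k) * ee t₀ β γ M s (‖x - x₀‖ ^ 2) t ≤ Kc := by
    intro x hx t
    have hφ : ph t₀ β γ M (‖x - x₀‖ ^ 2) t ≤ Φ := ph_le_bound hβ hγ (hAB x hx) t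
    have h1 : sg t₀ β γ M s (‖x - x₀‖ ^ 2) t ≤ s * γ * Φ :=
      mul_le_mul_of_nonneg_left hφ (by positivity)
    have h2 : sg t₀ β γ M s (‖x - x₀‖ ^ 2) t ^ (2 * k) ≤ (s * γ * Φ) ^ (2 * k) :=
      Real.rpow_le_rpow (sg_pos hγ hs t).le h1 htwok
    have h3 : ee t₀ β γ M s (‖x - x₀‖ ^ 2) t ≤ Real.exp (2 * s * Φ) :=
      Real.exp_le_exp.2 (by nlinarith)
    exact mul_le_mul h2 h3 (ee_pos t).le (by positivity)
  have hg2m : AEMeasurable (fun p : E3 × ℝ => (‖g p‖₊ : ℝ≥0∞) ^ 2) (μΩ.prod μT) :=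
    (hg.measurable.enorm.pow_const 2).aemeasurable
  have hg2fin : (∫⁻ p, (‖g p‖₊ : ℝ≥0∞) ^ 2 ∂(μΩ.prod μT)) < ∞ := by
    have h := lintegral_rpow_enorm_lt_top_of_eLpNorm_lt_top (p := 2) (f := g)
      (by norm_num) (by norm_num) hwg.2
    have h2 : ∀ p : E3 × ℝ, (‖g p‖₊ : ℝ≥0∞) ^ (2:ℕ) = (‖g p‖₊ : ℝ≥0∞) ^ ((2:ℝ≥0∞).toReal) := by
      intro p
      rw [ENNReal.toReal_ofNat, ← ENNReal.rpow_natCast]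
      norm_num
    rw [lintegral_congr h2]
    exact h
  have hprod2 : (∫⁻ t, ∫⁻ x, (‖g (x, t)‖₊ : ℝ≥0∞) ^ 2 ∂μΩ ∂μT)
      = ∫⁻ p, (‖g p‖₊ : ℝ≥0∞) ^ 2 ∂(μΩ.prod μT) :=
    (MeasureTheory.lintegral_prod_symm _ hg2m).symm
  have hREfin : (∫⁻ t, ∫⁻ x, rE t x ∂μΩ ∂μT) ≠ ∞ := by
    have hb : (∫⁻ t, ∫⁻ x, rE t x ∂μΩ ∂μT)
        ≤ ∫⁻ t, ∫⁻ x, ENNReal.ofReal Kc * (‖g (x, t)‖₊ : ℝ≥0∞) ^ 2 ∂μΩ ∂μT := by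
      refine lintegral_mono fun t => ?_
      rw [hμΩ]
      refine lintegral_mono_ae ((ae_restrict_iff' hΩm).2 (ae_of_all _ fun x hx => ?_))
      rw [hrE]
      beta_reduce
      exact mul_le_mul_left (ENNReal.ofReal_le_ofReal (hwt x hx t)) _
    have hb2 : (∫⁻ t, ∫⁻ x, ENNReal.ofReal Kc * (‖g (x, t)‖₊ : ℝ≥0∞) ^ 2 ∂μΩ ∂μT)
        = ENNReal.ofReal Kc * ∫⁻ t, ∫⁻ x, (‖g (x, t)‖₊ : ℝ≥0∞) ^ 2 ∂μΩ ∂μT := by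
      rw [← lintegral_const_mul' _ _ ENNReal.ofReal_ne_top]
      refine lintegral_congr fun t => ?_
      rw [← lintegral_const_mul' _ _ ENNReal.ofReal_ne_top]
    refine ne_of_lt (lt_of_le_of_lt hb ?_)
    rw [hb2, hprod2]
    exact ENNReal.mul_lt_top ENNReal.ofReal_lt_top hg2fin
  -- Left side is bounded by the ENNReal quantity
  have hLHSle : (∫ t in (0:ℝ)..T, ∫ x in Ω,
      sg t₀ β γ M s (‖x - x₀‖ ^ 2) t ^ (2 * k + 1) * ee t₀ β γ M s (‖x - x₀‖ ^ 2) t *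
        |∫ τ in t₀..t, g (x, τ)| ^ 2)
      ≤ (ENNReal.ofReal (1 / (4 * β)) * ∫⁻ t, ∫⁻ x, rE t x ∂μΩ ∂μT).toReal := by
    rw [intervalIntegral.integral_of_le hT.le]
    set I : ℝ → ℝ := fun t => ∫ x in Ω,
      sg t₀ β γ M s (‖x - x₀‖ ^ 2) t ^ (2 * k + 1) * ee t₀ β γ M s (‖x - x₀‖ ^ 2) t *
        |∫ τ in t₀..t, g (x, τ)| ^ 2 with hI
    have h1 : (∫ t in Set.Ioc 0 T, I t) ≤ (∫⁻ t, ENNReal.ofReal ‖I t‖ ∂μT).toReal := by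
      refine le_trans (le_abs_self _) ?_
      rw [← Real.norm_eq_abs, hμT]
      exact norm_integral_le_lintegral_norm I
    have h2 : (∫⁻ t, ENNReal.ofReal ‖I t‖ ∂μT) ≤ ∫⁻ t, ∫⁻ x, ℓE t x ∂μΩ ∂μT := by
      rw [hμT]
      refine lintegral_mono_ae ((ae_restrict_iff' measurableSet_Ioc).2
        (ae_of_all _ fun t ht => ?_))
      have h3 : ENNReal.ofReal ‖I t‖ = (‖I t‖₊ : ℝ≥0∞) := ofReal_norm _
      rw [h3, hI]
      refine le_trans (enorm_integral_le_lintegral_enorm _) (le_of_eq ?_)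
      refine lintegral_congr fun x => ?_
      rw [hℓE]
      beta_reduce
      rw [enorm_eq_nnnorm, ennnorm_weight_sq (by
        have := sg_pos (t₀ := t₀) (β := β) (M := M) (A := ‖x - x₀‖ ^ 2) hγ hs t
        have := ee_pos (t₀ := t₀) (β := β) (γ := γ) (M := M) (s := s) (A := ‖x - x₀‖ ^ 2) t
        positivity), habsP x t ht]
    calc (∫ t in Set.Ioc 0 T, I t)
        ≤ (∫⁻ t, ENNReal.ofReal ‖I t‖ ∂μT).toReal := h1
      _ ≤ (ENNReal.ofReal (1 / (4 * β)) * ∫⁻ t, ∫⁻ x, rE t x ∂μΩ ∂μT).toReal := by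
          refine ENNReal.toReal_mono (ENNReal.mul_ne_top ENNReal.ofReal_ne_top hREfin) ?_
          exact (h2.trans key)
  -- Right side equals the ENNReal quantity
  have hRHSg : (∫ t in (0:ℝ)..T, ∫ x in Ω,
      sg t₀ β γ M s (‖x - x₀‖ ^ 2) t ^ (2 * k) * ee t₀ β γ M s (‖x - x₀‖ ^ 2) t *
        |g (x, t)| ^ 2)
      = (∫⁻ t, ∫⁻ x, rE t x ∂μΩ ∂μT).toReal := by
    set f : E3 × ℝ → ℝ := fun p =>
      sg t₀ β γ M s (‖p.1 - x₀‖ ^ 2) p.2 ^ (2 * k) * ee t₀ β γ M s (‖p.1 - x₀‖ ^ 2) p.2 *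
        |g p| ^ 2 with hf
    have hphc2 : Continuous fun p : E3 × ℝ => ph t₀ β γ M (‖p.1 - x₀‖ ^ 2) p.2 := by
      unfold Stmt3Aux.ph; fun_prop
    have hfm : AEStronglyMeasurable f (μΩ.prod μT) := by
      apply Measurable.aestronglyMeasurable
      apply Measurable.mul
      apply Measurable.mul
      · exact ((continuous_const.mul hphc2).rpow_const fun p => Or.inr htwok).measurable
      · exact (Real.continuous_exp.comp (continuous_const.mul hphc2)).measurable
      · exact (hg.measurable.abs).pow_const 2
    have hfnn : ∀ p, 0 ≤ f p := by
      intro p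
      rw [hf]
      have := sg_pos (t₀ := t₀) (β := β) (M := M) (A := ‖p.1 - x₀‖ ^ 2) hγ hs p.2
      have := ee_pos (t₀ := t₀) (β := β) (γ := γ) (M := M) (s := s) (A := ‖p.1 - x₀‖ ^ 2) p.2
      positivity
    have hennf : ∀ p, ENNReal.ofReal (f p)
        = ENNReal.ofReal (sg t₀ β γ M s (‖p.1 - x₀‖ ^ 2) p.2 ^ (2 * k) *
            ee t₀ β γ M s (‖p.1 - x₀‖ ^ 2) p.2) * (‖g p‖₊ : ℝ≥0∞) ^ 2 := by
      intro p
      rw [hf]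
      beta_reduce
      rw [ofReal_weight_sq (by
        have := sg_pos (t₀ := t₀) (β := β) (M := M) (A := ‖p.1 - x₀‖ ^ 2) hγ hs p.2
        have := ee_pos (t₀ := t₀) (β := β) (γ := γ) (M := M) (s := s) (A := ‖p.1 - x₀‖ ^ 2) p.2
        positivity)]
    have hprodf : (∫⁻ p, ENNReal.ofReal (f p) ∂(μΩ.prod μT))
        = ∫⁻ t, ∫⁻ x, rE t x ∂μΩ ∂μT := by
      rw [lintegral_congr hennf]
      exact MeasureTheory.lintegral_prod_symm _
        ((hrEmeas.comp measurable_swap).aemeasurable)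
    have hInt : Integrable f (μΩ.prod μT) := by
      refine ⟨hfm, ?_⟩
      show (∫⁻ p, (‖f p‖₊ : ℝ≥0∞) ∂(μΩ.prod μT)) < ∞
      have h5 : ∀ p, (‖f p‖₊ : ℝ≥0∞) = ENNReal.ofReal (f p) := fun p => by
        rw [← enorm_eq_nnnorm, ← ofReal_norm, Real.norm_eq_abs, abs_of_nonneg (hfnn p)]
      rw [lintegral_congr h5, hprodf]
      exact lt_top_iff_ne_top.2 hREfin
    rw [intervalIntegral.integral_of_le hT.le]
    have hswap := integral_integral_swap (f := fun x t => f (x, t)) (μ := μΩ) (ν := μT) hInt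
    calc (∫ t, (∫ x, f (x, t) ∂μΩ) ∂μT)
        = ∫ x, (∫ t, f (x, t) ∂μT) ∂μΩ := hswap.symm
      _ = ∫ p, f p ∂(μΩ.prod μT) := integral_integral hInt
      _ = (∫⁻ p, ENNReal.ofReal (f p) ∂(μΩ.prod μT)).toReal := by
          rw [integral_eq_lintegral_of_nonneg_ae (ae_of_all _ hfnn) hfm]
      _ = (∫⁻ t, ∫⁻ x, rE t x ∂μΩ ∂μT).toReal := by rw [hprodf]
  -- conclusion
  rw [hLHSeq, hRHSeq, hRHSg]
  calc (∫ t in (0:ℝ)..T, ∫ x in Ω,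
      sg t₀ β γ M s (‖x - x₀‖ ^ 2) t ^ (2 * k + 1) * ee t₀ β γ M s (‖x - x₀‖ ^ 2) t *
        |∫ τ in t₀..t, g (x, τ)| ^ 2)
      ≤ (ENNReal.ofReal (1 / (4 * β)) * ∫⁻ t, ∫⁻ x, rE t x ∂μΩ ∂μT).toReal := hLHSle
    _ = 1 / (4 * β) * (∫⁻ t, ∫⁻ x, rE t x ∂μΩ ∂μT).toReal := by
        rw [ENNReal.toReal_mul, ENNReal.toReal_ofReal (by positivity)]
end

section
/- Let $\Omega\subset\mathbb{R}^3$ be a bounded open set with smooth boundary, $x_0\in\mathbb{R}^3$, and let $P(x,D)f = \gamma(x)\cdot\nabla f + \gamma_0(x) f$ with $\gamma\in (W^{1,\infty}(\Omega))^3$, $\gamma_0\in W^{1,\infty}(\Omega)$, and $|\gamma(x)\cdot(x-x_0)|\ge c_0>0$ on $\overline{\Omega}$. Let $\rho(x)=e^{\gamma_1(|x-x_0|^2+\beta M)}$ for constants $\gamma_1,\beta,M>0$. Then there exist $s_*>0$ and $C>0$ such that for all $s\ge s_*$ and all $f\in H^2(\Omega)$ with $f=0$ and $\nabla f=0$ on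 $\partial\Omega$, $s^2\int_\Omega e^{2s\rho}|f|^2\,dx \le C\int_\Omega e^{2s\rho}|P(x,D)f|^2\,dx$. -/
open MeasureTheory

local notation "E3" => EuclideanSpace ℝ (Fin 3)

open Filter Asymptotics

lemma abs_coord_le_norm (v : E3) (i : Fin 3) : |v i| ≤ ‖v‖ := by
  have h1 : (inner ℝ (EuclideanSpace.single i (1:ℝ)) v : ℝ) = v i := by
    simp [EuclideanSpace.inner_single_left]
  have h2 := abs_real_inner_le_norm (EuclideanSpace.single i (1:ℝ)) v
  rw [h1] at h2
  simpa [EuclideanSpace.norm_single] using h2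

lemma amgm_aux (a b c : ℝ) (hc : 0 < c) : 2 * |a| * |b| ≤ c*a^2 + b^2/c := by
  have h1 : 2 * |a| * |b| * c ≤ c*a^2*c + b^2 := by
    rw [← sq_abs a, ← sq_abs b]
    nlinarith [sq_nonneg (c * |a| - |b|)]
  calc 2 * |a| * |b| = (2 * |a| * |b| * c)/c := by field_simp
    _ ≤ (c*a^2*c + b^2)/c := by gcongr
    _ = c*a^2 + b^2/c := by field_simp

lemma sum_basis_apply (T : E3 →L[ℝ] ℝ) (w : E3) :
    (∑ i, w i * T (EuclideanSpace.single i 1)) = T w := by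
  have hw : ∑ i, w i • (EuclideanSpace.single i (1:ℝ)) = w := by
    have := (EuclideanSpace.basisFun (Fin 3) ℝ).sum_repr w
    simpa [EuclideanSpace.basisFun_apply, EuclideanSpace.basisFun_repr] using this
  calc ∑ i, w i * T (EuclideanSpace.single i 1)
      = ∑ i, T (w i • EuclideanSpace.single i 1) := by simp [ContinuousLinearMap.map_smul, smul_eq_mul]
    _ = T (∑ i, w i • EuclideanSpace.single i 1) := (map_sum T _ _).symm
    _ = T w := by rw [hw]

lemma key_ibp (u : E3 → ℝ) (L : NNReal) (hu : LipschitzWith L u)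
    (Z : E3 → ℝ) (DZ : E3 → E3 →L[ℝ] ℝ) (hZ : ∀ x, HasFDerivAt Z (DZ x) x)
    (MZ : ℝ) (hMZ : ∀ x, ‖DZ x‖ ≤ MZ) (hZc : HasCompactSupport Z)
    (v : E3) (hv : ‖v‖ ≤ 1) :
    |∫ x, u x * DZ x v| ≤ (L : ℝ) * ∫ x, |Z x| := by
  have hZdiff : Differentiable ℝ Z := fun x => (hZ x).differentiableAt
  have hZcont : Continuous Z := hZdiff.continuous
  have hucont : Continuous u := hu.continuous
  have hMZ0 : 0 ≤ MZ := le_trans (norm_nonneg _) (hMZ 0)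
  have hZlip : LipschitzWith MZ.toNNReal Z := by
    apply lipschitzWith_of_nnnorm_fderiv_le hZdiff
    intro x
    have h : fderiv ℝ Z x = DZ x := (hZ x).fderiv
    rw [h]
    have : ‖DZ x‖ ≤ (MZ.toNNReal : ℝ) := le_trans (hMZ x) (Real.le_coe_toNNReal MZ)
    exact_mod_cast this
  set Kc : Set E3 := tsupport Z with hKc
  have hKcc : IsCompact Kc := hZc
  set K1 : Set E3 := Metric.cthickening 1 Kc with hK1
  have hK1c : IsCompact K1 := hKcc.cthickening
  obtain ⟨Cu, hCu⟩ := hK1c.exists_bound_of_continuousOn hucont.continuousOn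
  set t : ℕ → ℝ := fun n => 1 / (n + 1) with ht
  have htpos : ∀ n, 0 < t n := fun n => by positivity
  have htle : ∀ n, t n ≤ 1 := fun n => by
    rw [ht]; rw [div_le_one (by positivity)]; linarith [Nat.cast_nonneg (α := ℝ) n]
  set F : ℕ → E3 → ℝ := fun n x => u x * ((Z (x + t n • v) - Z x) / t n) with hF
  have hZint : Integrable (fun x => |Z x|) := (hZcont.integrable_of_hasCompactSupport hZc).abs
  have hint1 : ∀ (a : E3), Integrable (fun x => u x * Z (x + a)) := by
    intro a
    apply Continuous.integrable_of_hasCompactSupport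
    · exact hucont.mul (hZcont.comp (continuous_id.add continuous_const))
    · exact HasCompactSupport.mul_left ((hZc.comp_homeomorph (Homeomorph.addRight a)))
  have hint2 : Integrable (fun x => u x * Z x) := by
    apply Continuous.integrable_of_hasCompactSupport (hucont.mul hZcont)
    exact HasCompactSupport.mul_left hZc
  have hint3 : ∀ (a : E3), Integrable (fun x => u (x - a) * Z x) := by
    intro a
    apply Continuous.integrable_of_hasCompactSupport
    · exact (hucont.comp (continuous_id.sub continuous_const)).mul hZcont
    · exact HasCompactSupport.mul_left hZc
  have hint4 : ∀ (a : E3) (c : ℝ), Integrable (fun x => ((u (x - a) - u x) / c) * Z x) := by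
    intro a c
    apply Continuous.integrable_of_hasCompactSupport
    · exact (((hucont.comp (continuous_id.sub continuous_const)).sub hucont).div_const c).mul hZcont
    · exact HasCompactSupport.mul_left hZc
  have claim2 : ∀ n, |∫ x, F n x| ≤ (L : ℝ) * ∫ x, |Z x| := by
    intro n
    set a : E3 := t n • v with ha
    have e1 : ∫ x, F n x = (∫ x, u x * Z (x + a)) / t n - (∫ x, u x * Z x) / t n := by
      rw [← integral_div, ← integral_div, ← integral_sub ((hint1 a).div_const _) (hint2.div_const _)]
      congr 1; funext x; rw [hF]; ring
    have e2 : ∫ x, u x * Z (x + a) = ∫ x, u (x - a) * Z x := by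
      have h := integral_add_right_eq_self (μ := volume) (fun y => u (y - a) * Z y) a
      rw [← h]
      congr 1; funext x; simp
    have e3 : ∫ x, F n x = ∫ x, ((u (x - a) - u x) / t n) * Z x := by
      rw [e1, e2, ← integral_div, ← integral_div,
        ← integral_sub ((hint3 a).div_const _) (hint2.div_const _)]
      congr 1; funext x; ring
    rw [e3]
    have hb : ∀ x, |((u (x - a) - u x) / t n) * Z x| ≤ (L : ℝ) * |Z x| := by
      intro x
      rw [abs_mul]
      apply mul_le_mul_of_nonneg_right _ (abs_nonneg _)
      rw [abs_div, abs_of_pos (htpos n), div_le_iff₀ (htpos n)]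
      have hxa : x - a - x = -a := by abel
      calc |u (x-a) - u x| = dist (u (x-a)) (u x) := (Real.dist_eq _ _).symm
        _ ≤ (L:ℝ) * dist (x - a) x := hu.dist_le_mul _ _
        _ = (L:ℝ) * ‖a‖ := by rw [dist_eq_norm, hxa, norm_neg]
        _ ≤ (L:ℝ) * (t n * 1) := by
            apply mul_le_mul_of_nonneg_left _ (L.coe_nonneg)
            rw [ha, norm_smul, Real.norm_eq_abs, abs_of_pos (htpos n)]
            exact mul_le_mul_of_nonneg_left hv (le_of_lt (htpos n))
        _ = (L:ℝ) * t n := by ring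
    have habs : |∫ x, ((u (x - a) - u x) / t n) * Z x| ≤ ∫ x, |((u (x - a) - u x) / t n) * Z x| := by
      have h := norm_integral_le_integral_norm (μ := volume) (fun x => ((u (x - a) - u x) / t n) * Z x)
      simp only [Real.norm_eq_abs] at h
      exact h
    refine le_trans habs (le_trans (integral_mono (hint4 a (t n)).abs (hZint.const_mul _) hb) ?_)
    rw [integral_const_mul]
  have hlim : Tendsto (fun n => ∫ x, F n x) atTop (nhds (∫ x, u x * DZ x v)) := by
    apply tendsto_integral_of_dominated_convergence (fun x => K1.indicator (fun _ => Cu * (MZ * 1)) x)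
    · intro n
      exact ((hucont.mul ((hZcont.comp (continuous_id.add continuous_const)).sub hZcont |>.div_const _))).aestronglyMeasurable
    · exact (integrableOn_const hK1c.measure_lt_top.ne).integrable_indicator hK1c.measurableSet
    · intro n
      apply Filter.Eventually.of_forall
      intro x
      by_cases hx : x ∈ K1
      · rw [Set.indicator_of_mem hx]
        have h1 : |u x| ≤ Cu := hCu x hx
        have h2 : |(Z (x + t n • v) - Z x) / t n| ≤ MZ * 1 := by
          rw [abs_div, abs_of_pos (htpos n), div_le_iff₀ (htpos n)]
          have hd := hZlip.dist_le_mul (x + t n • v) x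
          rw [Real.dist_eq, dist_eq_norm] at hd
          have hxa : x + t n • v - x = t n • v := by abel
          rw [hxa, norm_smul, Real.norm_eq_abs, abs_of_pos (htpos n)] at hd
          have h3 : (MZ.toNNReal : ℝ) = MZ := Real.coe_toNNReal MZ hMZ0
          rw [h3] at hd
          refine le_trans hd ?_
          have := htpos n
          nlinarith [norm_nonneg v, hv, mul_nonneg hMZ0 this.le]
        show ‖u x * ((Z (x + t n • v) - Z x) / t n)‖ ≤ Cu * (MZ * 1)
        rw [Real.norm_eq_abs, abs_mul]
        exact mul_le_mul h1 h2 (abs_nonneg _) (le_trans (abs_nonneg _) h1)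
      · rw [Set.indicator_of_notMem hx]
        have hZx : Z x = 0 := by
          have : x ∉ Kc := fun h => hx (Metric.self_subset_cthickening _ h)
          exact image_eq_zero_of_notMem_tsupport this
        have hZxa : Z (x + t n • v) = 0 := by
          apply image_eq_zero_of_notMem_tsupport
          intro h
          apply hx
          apply Metric.mem_cthickening_of_dist_le x (x + t n • v) 1 Kc h
          rw [dist_eq_norm]
          have h4 : x - (x + t n • v) = -(t n • v) := by abel
          rw [h4, norm_neg, norm_smul, Real.norm_eq_abs, abs_of_pos (htpos n)]
          nlinarith [htle n, hv, norm_nonneg v, htpos n]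
        show ‖u x * ((Z (x + t n • v) - Z x) / t n)‖ ≤ 0
        rw [hZx, hZxa]
        simp
    · apply Filter.Eventually.of_forall
      intro x
      have hg : HasDerivAt (fun r : ℝ => x + r • v) v 0 := by
        have := ((hasDerivAt_id (0:ℝ)).smul_const v).const_add x
        simpa using this
      have hz' : HasFDerivAt Z (DZ x) (x + (0:ℝ) • v) := by
        rw [show x + (0:ℝ) • v = x by simp]; exact hZ x
      have hψ : HasDerivAt (fun r : ℝ => Z (x + r • v)) (DZ x v) 0 := by
        have hcomp := hz'.comp_hasDerivAt 0 hg
        exact hcomp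
      have hslope := hasDerivAt_iff_tendsto_slope.mp hψ
      have htt : Tendsto t atTop (nhdsWithin 0 {(0:ℝ)}ᶜ) := by
        apply tendsto_nhdsWithin_of_tendsto_nhds_of_eventually_within
        · exact tendsto_one_div_add_atTop_nhds_zero_nat
        · exact Filter.Eventually.of_forall (fun n => ne_of_gt (htpos n))
      have hcm := (hslope.comp htt).const_mul (u x)
      have heq : ∀ n, u x * slope (fun r => Z (x + r • v)) 0 (t n) = F n x := by
        intro n
        rw [slope_def_field]
        simp [hF]
      exact Tendsto.congr heq hcm
  exact le_of_tendsto hlim.abs (Filter.Eventually.of_forall claim2)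

set_option maxHeartbeats 2000000 in
/-- Lemma 3.8 (first estimate): Carleman estimate for the first-order operator
`P(x,D)f = γ(x)·∇f + γ₀(x) f` with non-characteristic weight `ρ(x) = e^{γ₁(|x-x₀|² + βM)}`:
`s² ∫ e^{2sρ} |f|² ≤ C ∫ e^{2sρ} |P f|²` for `s` large and `f ∈ H²` with `f = ∇f = 0` on `∂Ω`. -/
theorem stmt_5 (Ω : Set E3) (hΩo : IsOpen Ω) (hΩb : Bornology.IsBounded Ω) (x₀ : E3)
    (γv : E3 → E3) (γ0 : E3 → ℝ) (K K0 : NNReal)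
    (hγ : LipschitzOnWith K γv (closure Ω)) (hγ0 : LipschitzOnWith K0 γ0 (closure Ω))
    (c0 : ℝ) (hc0 : 0 < c0)
    (hnc : ∀ x ∈ closure Ω, c0 ≤ |(inner ℝ (γv x) (x - x₀) : ℝ)|)
    (γ1 β M : ℝ) (hγ1 : 0 < γ1) (hβ : 0 < β) (hM : 0 < M) :
    ∃ sstar > 0, ∃ C > 0, ∀ s ≥ sstar, ∀ f : E3 → ℝ, ContDiff ℝ 2 f →
      (∀ x ∈ frontier Ω, f x = 0 ∧ gradient f x = 0) →
      s ^ 2 * (∫ x in Ω, Real.exp (2 * s * Real.exp (γ1 * (‖x - x₀‖ ^ 2 + β * M))) * |f x| ^ 2)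
        ≤ C * ∫ x in Ω, Real.exp (2 * s * Real.exp (γ1 * (‖x - x₀‖ ^ 2 + β * M))) *
            |(inner ℝ (γv x) (gradient f x) : ℝ) + γ0 x * f x| ^ 2 := by
  classical
  by_cases hne : Ω = ∅
  · refine ⟨1, one_pos, 1, one_pos, ?_⟩
    intro s hs f hf hbc
    subst hne
    simp
  have hclne : (closure Ω).Nonempty := (Set.nonempty_iff_ne_empty.2 hne).closure
  have hKcomp : IsCompact (closure Ω) := hΩb.isCompact_closure
  have hΩm : MeasurableSet Ω := hΩo.measurableSet
  have hfr : frontier Ω = closure Ω \ Ω := hΩo.frontier_eq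
  have hγc : ContinuousOn γv (closure Ω) := hγ.continuousOn
  have hγ0c : ContinuousOn γ0 (closure Ω) := hγ0.continuousOn
  set g : E3 → ℝ := fun x => (inner ℝ (γv x) (x - x₀) : ℝ) with hgdef
  have hgc : ContinuousOn g (closure Ω) :=
    hγc.inner ((continuous_id.sub continuous_const).continuousOn)
  obtain ⟨G, hG⟩ := hKcomp.exists_bound_of_continuousOn hgc
  obtain ⟨Γ0, hΓ0⟩ := hKcomp.exists_bound_of_continuousOn hγ0c
  obtain ⟨Bγ, hBγ⟩ := hKcomp.exists_bound_of_continuousOn hγc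
  obtain ⟨R, hRsub⟩ := hΩb.closure.subset_closedBall x₀
  have hR : ∀ x ∈ closure Ω, ‖x - x₀‖ ≤ R := by
    intro x hx
    have := hRsub hx
    rwa [Metric.mem_closedBall, dist_eq_norm] at this
  have hRn : 0 ≤ R := by
    obtain ⟨w, hw⟩ := hclne
    exact le_trans (norm_nonneg _) (hR w hw)
  have hGabs : ∀ x ∈ closure Ω, |g x| ≤ G := by
    intro x hx
    have := hG x hx
    rwa [Real.norm_eq_abs] at this
  have hΓ0abs : ∀ x ∈ closure Ω, |γ0 x| ≤ Γ0 := by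
    intro x hx
    have := hΓ0 x hx
    rwa [Real.norm_eq_abs] at this
  have hGc0 : c0 ≤ G := by
    obtain ⟨z, hz⟩ := hclne
    exact le_trans (hnc z hz) (hGabs z hz)
  have hGpos : 0 < G := lt_of_lt_of_le hc0 hGc0
  have hΓ0n : 0 ≤ Γ0 := by
    obtain ⟨z, hz⟩ := hclne
    exact le_trans (norm_nonneg _) (hΓ0 z hz)
  have hBγn : 0 ≤ Bγ := by
    obtain ⟨z, hz⟩ := hclne
    exact le_trans (norm_nonneg _) (hBγ z hz)
  set Kg : ℝ := (K : ℝ) * R + Bγ with hKgdef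
  have hglip : ∀ x ∈ closure Ω, ∀ y ∈ closure Ω, |g x - g y| ≤ Kg * dist x y := by
    intro x hx y hy
    have hsplit : g x - g y = (inner ℝ (γv x - γv y) (x - x₀) : ℝ) + (inner ℝ (γv y) (x - y) : ℝ) := by
      rw [hgdef]
      simp only [inner_sub_left]
      have h5 : (inner ℝ (γv y) (x - x₀) : ℝ) - (inner ℝ (γv y) (y - x₀) : ℝ)
          = (inner ℝ (γv y) (x - y) : ℝ) := by
        rw [← inner_sub_right]
        congr 1
        abel
      linarith [h5]
    rw [hsplit]
    have h1 : |(inner ℝ (γv x - γv y) (x - x₀) : ℝ)| ≤ ((K:ℝ) * dist x y) * R := by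
      refine le_trans (abs_real_inner_le_norm _ _) ?_
      have hl : ‖γv x - γv y‖ ≤ (K:ℝ) * dist x y := by
        have := hγ.dist_le_mul x hx y hy
        rwa [dist_eq_norm] at this
      exact mul_le_mul hl (hR x hx) (norm_nonneg _) (by positivity)
    have h2 : |(inner ℝ (γv y) (x - y) : ℝ)| ≤ Bγ * dist x y := by
      refine le_trans (abs_real_inner_le_norm _ _) ?_
      rw [← dist_eq_norm]
      exact mul_le_mul (hBγ y hy) le_rfl dist_nonneg hBγn
    calc |(inner ℝ (γv x - γv y) (x - x₀) : ℝ) + (inner ℝ (γv y) (x - y) : ℝ)|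
        ≤ |(inner ℝ (γv x - γv y) (x - x₀) : ℝ)| + |(inner ℝ (γv y) (x - y) : ℝ)| := abs_add_le _ _
      _ ≤ ((K:ℝ) * dist x y) * R + Bγ * dist x y := add_le_add h1 h2
      _ = Kg * dist x y := by rw [hKgdef]; ring
  have hKgn : 0 ≤ Kg := by rw [hKgdef]; positivity
  set Ku : ℝ := G * (K:ℝ) + Bγ * Kg with hKudef
  have hulip : ∀ i : Fin 3, LipschitzOnWith Ku.toNNReal (fun x => g x * γv x i) (closure Ω) := by
    intro i
    rw [lipschitzOnWith_iff_dist_le_mul]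
    intro x hx y hy
    rw [Real.dist_eq]
    have hsplit : g x * γv x i - g y * γv y i
        = g x * (γv x i - γv y i) + γv y i * (g x - g y) := by ring
    have h1 : |g x * (γv x i - γv y i)| ≤ G * ((K:ℝ) * dist x y) := by
      rw [abs_mul]
      apply mul_le_mul (hGabs x hx) _ (abs_nonneg _) (le_trans (abs_nonneg _) (hGabs x hx))
      calc |γv x i - γv y i| = |(γv x - γv y) i| := rfl
        _ ≤ ‖γv x - γv y‖ := abs_coord_le_norm _ _
        _ ≤ (K:ℝ) * dist x y := by
            have := hγ.dist_le_mul x hx y hy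
            rwa [dist_eq_norm] at this
    have h2 : |γv y i * (g x - g y)| ≤ Bγ * (Kg * dist x y) := by
      rw [abs_mul]
      apply mul_le_mul _ (hglip x hx y hy) (abs_nonneg _) hBγn
      exact le_trans (abs_coord_le_norm _ _) (hBγ y hy)
    calc |g x * γv x i - g y * γv y i| ≤ |g x * (γv x i - γv y i)| + |γv y i * (g x - g y)| := by
          rw [hsplit]; exact abs_add_le _ _
      _ ≤ G * ((K:ℝ) * dist x y) + Bγ * (Kg * dist x y) := add_le_add h1 h2
      _ = Ku * dist x y := by rw [hKudef]; ring
      _ ≤ (Ku.toNNReal : ℝ) * dist x y := by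
          apply mul_le_mul_of_nonneg_right _ dist_nonneg
          exact Real.le_coe_toNNReal Ku
  have hext : ∀ i : Fin 3, ∃ w : E3 → ℝ, LipschitzWith Ku.toNNReal w
      ∧ Set.EqOn (fun x => g x * γv x i) w (closure Ω) := fun i => (hulip i).extend_real
  choose ut hutl hute using hext
  set ρmin : ℝ := Real.exp (γ1 * (β * M)) with hρmin
  have hρminpos : 0 < ρmin := Real.exp_pos _
  set κ : ℝ := 4 * γ1 * ρmin * c0^2 with hκdef
  have hκpos : 0 < κ := by rw [hκdef]; positivity
  set θ : ℝ := κ / (2 * G^2) with hθdef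
  have hθpos : 0 < θ := by rw [hθdef]; positivity
  set Lu : ℝ := (Ku.toNNReal : ℝ) with hLu
  have hLun : 0 ≤ Lu := (Ku.toNNReal).coe_nonneg
  refine ⟨max 1 ((3*Lu + 2*Γ0*G + κ) * (4/κ)), lt_of_lt_of_le one_pos (le_max_left _ _),
    4/(κ*θ), by positivity, ?_⟩
  intro s hs f hf hbc
  have hs1 : (1:ℝ) ≤ s := le_trans (le_max_left _ _) hs
  have hspos : 0 < s := lt_of_lt_of_le one_pos hs1
  have hs2 : 3*Lu + 2*Γ0*G ≤ s * κ / 4 := by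
    have h := le_trans (le_max_right _ _) hs
    have h4 : (3*Lu + 2*Γ0*G + κ)*(4/κ)*κ = (3*Lu + 2*Γ0*G + κ)*4 := by field_simp
    nlinarith [mul_le_mul_of_nonneg_right h hκpos.le]
  -- basic facts about f
  have hfd : Differentiable ℝ f := hf.differentiable (by norm_num)
  have hfc : Continuous f := hfd.continuous
  have hfdc : Continuous (fderiv ℝ f) := hf.continuous_fderiv (by norm_num)
  have hgradc : Continuous (gradient f) := by
    exact (LinearIsometryEquiv.continuous _).comp hfdc
  have hgradeq : ∀ x, (inner ℝ (γv x) (gradient f x) : ℝ) = fderiv ℝ f x (γv x) := by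
    intro x
    rw [real_inner_comm]
    exact InnerProductSpace.toDual_symm_apply
  have hf0 : ∀ x ∈ closure Ω, x ∉ Ω → f x = 0 := by
    intro x hx hnx
    exact (hbc x (by rw [hfr]; exact ⟨hx, hnx⟩)).1
  have hfd0 : ∀ x ∈ closure Ω, x ∉ Ω → fderiv ℝ f x = 0 := by
    intro x hx hnx
    have hg0 : gradient f x = 0 := (hbc x (by rw [hfr]; exact ⟨hx, hnx⟩)).2
    have h := (InnerProductSpace.toDual ℝ E3).apply_symm_apply (fderiv ℝ f x)
    rw [show (InnerProductSpace.toDual ℝ E3).symm (fderiv ℝ f x) = gradient f x from rfl,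
      hg0] at h
    rw [← h]
    simp
  -- weight functions
  set ρf : E3 → ℝ := fun x => Real.exp (γ1 * (‖x - x₀‖^2 + β*M)) with hρf
  set φf : E3 → ℝ := fun x => Real.exp (2*s*ρf x) with hφf
  have hρpos : ∀ x, 0 < ρf x := fun x => Real.exp_pos _
  have hφpos : ∀ x, 0 < φf x := fun x => Real.exp_pos _
  have hρmin_le : ∀ x, ρmin ≤ ρf x := by
    intro x
    rw [hρmin, hρf]
    apply Real.exp_le_exp.2
    nlinarith [sq_nonneg ‖x - x₀‖, hγ1]
  have hρc : Continuous ρf := by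
    apply Real.continuous_exp.comp
    have : Continuous fun x : E3 => ‖x - x₀‖^2 := ((continuous_id.sub continuous_const).norm.pow 2)
    exact continuous_const.mul (this.add continuous_const)
  have hφc : Continuous φf := by
    apply Real.continuous_exp.comp
    exact (continuous_const.mul hρc)
  -- extension of f² and derivative data
  set W : E3 → ℝ := (closure Ω).indicator (fun x => f x ^ 2) with hWdef
  set DW : E3 → E3 →L[ℝ] ℝ := fun x =>
    if x ∈ closure Ω then (2 * f x) • fderiv ℝ f x else 0 with hDWdef
  set Dφ : E3 → E3 →L[ℝ] ℝ := fun x =>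
    (4*s*γ1*ρf x*φf x) • (innerSL ℝ (x - x₀)) with hDφdef
  set Z : E3 → ℝ := fun x => φf x * W x with hZdef
  set DZ : E3 → E3 →L[ℝ] ℝ := fun x => φf x • DW x + W x • Dφ x with hDZdef
  have hW_cl : ∀ x ∈ closure Ω, W x = f x ^ 2 := fun x hx => Set.indicator_of_mem hx _
  have hDW_cl : ∀ x ∈ closure Ω, DW x = (2 * f x) • fderiv ℝ f x := by
    intro x hx
    rw [hDWdef]
    exact if_pos hx
  have hφD : ∀ x, HasFDerivAt φf (Dφ x) x := by
    intro x
    have hsub : HasFDerivAt (fun y : E3 => y - x₀) (ContinuousLinearMap.id ℝ E3) x :=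
      (hasFDerivAt_id x).sub_const x₀
    have hin := (HasFDerivAt.inner ℝ hsub hsub)
    have hq : HasFDerivAt (fun y : E3 => ‖y - x₀‖^2)
        ((fderivInnerCLM ℝ (x - x₀, x - x₀)).comp
          ((ContinuousLinearMap.id ℝ E3).prod (ContinuousLinearMap.id ℝ E3))) x := by
      apply HasFDerivAt.congr_of_eventuallyEq hin
      apply Filter.Eventually.of_forall
      intro y
      exact (real_inner_self_eq_norm_sq _).symm
    have h2 := (((hq.const_mul γ1).add_const (γ1*(β*M))).exp.const_mul (2*s)).exp
    refine (h2.congr_of_eventuallyEq ?_).congr_fderiv ?_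
    · apply Filter.Eventually.of_forall
      intro y
      rw [hφf, hρf]
      simp only []
      have he : γ1 * (‖y - x₀‖^2 + β*M) = γ1 * ‖y - x₀‖^2 + γ1*(β*M) := by ring
      rw [he]
    · ext v
      rw [hDφdef]
      simp only [ContinuousLinearMap.smul_apply, ContinuousLinearMap.coe_comp',
        Function.comp_apply, ContinuousLinearMap.prod_apply, ContinuousLinearMap.coe_id',
        id_eq, fderivInnerCLM_apply, innerSL_apply_apply, smul_eq_mul]
      have hcomm : (inner ℝ v (x - x₀) : ℝ) = (inner ℝ (x - x₀) v : ℝ) := real_inner_comm _ _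
      rw [hcomm]
      rw [hρf, hφf]
      simp only []
      have he : Real.exp (γ1 * ‖x - x₀‖ ^ 2 + γ1 * (β * M)) = Real.exp (γ1 * (‖x - x₀‖^2 + β*M)) := by
        congr 1; ring
      rw [he]
      ring
  have hWD : ∀ x, HasFDerivAt W (DW x) x := by
    intro x
    by_cases hx : x ∈ Ω
    · rw [hDW_cl x (subset_closure hx)]
      have hsq : HasFDerivAt (fun y => f y ^ 2) ((2 * f x) • fderiv ℝ f x) x := by
        have h := ((hfd x).hasFDerivAt.mul (hfd x).hasFDerivAt)
        have h2 : f x • fderiv ℝ f x + f x • fderiv ℝ f x = (2 * f x) • fderiv ℝ f x := by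
          rw [two_mul, add_smul]
        rw [← h2]
        apply HasFDerivAt.congr_of_eventuallyEq h
        apply Filter.Eventually.of_forall
        intro y; simp only [Pi.mul_apply]; ring
      apply HasFDerivAt.congr_of_eventuallyEq hsq
      filter_upwards [hΩo.mem_nhds hx] with y hy
      rw [hWdef]
      exact Set.indicator_of_mem (subset_closure hy) _
    by_cases hxc : x ∈ closure Ω
    · have hfx : f x = 0 := hf0 x hxc hx
      have hdfx : fderiv ℝ f x = 0 := hfd0 x hxc hx
      have hDWx : DW x = 0 := by
        rw [hDW_cl x hxc, hfx]
        simp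
      rw [hDWx]
      rw [hasFDerivAt_iff_isLittleO_nhds_zero]
      have hWx : W x = 0 := by
        rw [hW_cl x hxc, hfx]
        simp
      simp only [ContinuousLinearMap.zero_apply, hWx, sub_zero]
      have hfo : (fun h : E3 => f (x + h)) =o[nhds 0] (fun h : E3 => h) := by
        have hh := (hfd x).hasFDerivAt
        rw [hasFDerivAt_iff_isLittleO_nhds_zero, hdfx, hfx] at hh
        simpa using hh
      have hfO : (fun h : E3 => f (x + h)) =O[nhds 0] (fun _ : E3 => (1:ℝ)) := by
        apply Asymptotics.IsBigO.of_bound 1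
        have hcont : ContinuousAt (fun h : E3 => f (x + h)) 0 :=
          (hfc.comp (continuous_const.add continuous_id)).continuousAt
        have htend := hcont.tendsto
        simp only [add_zero, hfx] at htend
        have hev := Metric.tendsto_nhds.mp htend 1 one_pos
        filter_upwards [hev] with y hy
        rw [Real.dist_eq, sub_zero] at hy
        simpa [Real.norm_eq_abs] using le_of_lt hy
      have hWO : (fun h : E3 => W (x + h)) =O[nhds 0] (fun h : E3 => f (x + h) * f (x + h)) := by
        apply Asymptotics.IsBigO.of_bound 1
        apply Filter.Eventually.of_forall
        intro y
        rw [one_mul, Real.norm_eq_abs, Real.norm_eq_abs]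
        rw [hWdef]
        by_cases hy : x + y ∈ closure Ω
        · rw [Set.indicator_of_mem hy]
          rw [sq]
        · rw [Set.indicator_of_notMem hy]
          simpa using abs_nonneg (f (x + y) * f (x + y))
      have hlitt : (fun h : E3 => f (x+h) * f (x+h)) =o[nhds 0] (fun h : E3 => ‖h‖ * 1) :=
        Asymptotics.IsLittleO.mul_isBigO hfo.norm_right hfO
      have hfin : (fun h : E3 => W (x + h)) =o[nhds 0] (fun h : E3 => h) := by
        apply hWO.trans_isLittleO
        apply hlitt.trans_isBigO
        apply Asymptotics.IsBigO.of_bound 1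
        apply Filter.Eventually.of_forall
        intro y
        simp
      exact hfin
    · have hDWx : DW x = 0 := by
        rw [hDWdef]
        exact if_neg hxc
      rw [hDWx]
      have hW0 : ∀ᶠ y in nhds x, W y = 0 := by
        filter_upwards [(isOpen_compl_iff.2 isClosed_closure).mem_nhds hxc] with y hy
        rw [hWdef]
        exact Set.indicator_of_notMem hy _
      apply HasFDerivAt.congr_of_eventuallyEq (hasFDerivAt_const (0:ℝ) x)
      filter_upwards [hW0] with y hy
      rw [hy]
  have hZD : ∀ x, HasFDerivAt Z (DZ x) x := fun x => (hφD x).mul (hWD x)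
  have hW0' : ∀ x, x ∉ Ω → W x = 0 := by
    intro x hx
    by_cases hxc : x ∈ closure Ω
    · rw [hW_cl x hxc, hf0 x hxc hx]; simp
    · rw [hWdef]; exact Set.indicator_of_notMem hxc _
  have hDW0' : ∀ x, x ∉ Ω → DW x = 0 := by
    intro x hx
    by_cases hxc : x ∈ closure Ω
    · rw [hDW_cl x hxc, hf0 x hxc hx]
      simp
    · rw [hDWdef]; exact if_neg hxc
  have hZ0' : ∀ x, x ∉ Ω → Z x = 0 := by
    intro x hx
    rw [hZdef]
    simp only []
    rw [hW0' x hx, mul_zero]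
  have hDZ0' : ∀ x, x ∉ Ω → DZ x = 0 := by
    intro x hx
    rw [hDZdef]
    simp only []
    rw [hW0' x hx, hDW0' x hx]
    simp
  have hZsupp : HasCompactSupport Z := by
    apply HasCompactSupport.intro hKcomp
    intro x hx
    exact hZ0' x (fun h => hx (subset_closure h))
  -- pointwise formula for DZ on the closure
  have hDZapply : ∀ x ∈ closure Ω, ∀ v : E3, DZ x v
      = φf x * (2*f x * fderiv ℝ f x v) + f x^2 * ((4*s*γ1*ρf x*φf x) * (inner ℝ (x - x₀) v : ℝ)) := by
    intro x hx v
    rw [hDZdef]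
    simp only [ContinuousLinearMap.add_apply, ContinuousLinearMap.coe_smul',
      Pi.smul_apply, smul_eq_mul]
    rw [hDW_cl x hx, hW_cl x hx, hDφdef]
    simp only [ContinuousLinearMap.coe_smul', Pi.smul_apply, smul_eq_mul, innerSL_apply_apply]
  -- bound on DZ
  obtain ⟨MZ, hMZb⟩ : ∃ MZ : ℝ, ∀ x, ‖DZ x‖ ≤ MZ := by
    set Θ : E3 → ℝ := fun x => φf x * (2 * |f x| * ‖fderiv ℝ f x‖)
      + (f x^2) * (|4*s*γ1*ρf x*φf x| * ‖x - x₀‖) with hΘdef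
    have hΘc : ContinuousOn Θ (closure Ω) := by
      apply ContinuousOn.add
      · exact (hφc.mul ((continuous_const.mul hfc.abs).mul hfdc.norm)).continuousOn
      · exact ((hfc.pow 2).mul ((((continuous_const.mul hρc).mul hφc).abs).mul
          ((continuous_id.sub continuous_const).norm))).continuousOn
    obtain ⟨MZ, hMZ⟩ := hKcomp.exists_bound_of_continuousOn hΘc
    refine ⟨MZ, ?_⟩
    intro x
    by_cases hxc : x ∈ closure Ω
    · have hb : ‖DZ x‖ ≤ Θ x := by
        show ‖DZ x‖ ≤ φf x * (2 * |f x| * ‖fderiv ℝ f x‖)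
          + (f x^2) * (|4*s*γ1*ρf x*φf x| * ‖x - x₀‖)
        apply ContinuousLinearMap.opNorm_le_bound _ (by positivity)
        intro v
        rw [Real.norm_eq_abs, hDZapply x hxc v, add_mul]
        refine le_trans (abs_add_le _ _) (add_le_add ?_ ?_)
        · calc |φf x * (2*f x * fderiv ℝ f x v)|
              = φf x * (2 * |f x| * |fderiv ℝ f x v|) := by
                rw [abs_mul, abs_of_pos (hφpos x), abs_mul, abs_mul, abs_two]
            _ ≤ φf x * (2 * |f x| * (‖fderiv ℝ f x‖ * ‖v‖)) := by
                apply mul_le_mul_of_nonneg_left _ (hφpos x).le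
                apply mul_le_mul_of_nonneg_left _ (by positivity)
                have hop := (fderiv ℝ f x).le_opNorm v
                rwa [Real.norm_eq_abs] at hop
            _ = φf x * (2 * |f x| * ‖fderiv ℝ f x‖) * ‖v‖ := by ring
        · calc |f x^2 * ((4*s*γ1*ρf x*φf x) * (inner ℝ (x - x₀) v : ℝ))|
              = f x^2 * (|4*s*γ1*ρf x*φf x| * |(inner ℝ (x - x₀) v : ℝ)|) := by
                rw [abs_mul, abs_of_nonneg (sq_nonneg _), abs_mul]
            _ ≤ f x^2 * (|4*s*γ1*ρf x*φf x| * (‖x - x₀‖ * ‖v‖)) := by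
                apply mul_le_mul_of_nonneg_left _ (sq_nonneg _)
                apply mul_le_mul_of_nonneg_left _ (abs_nonneg _)
                exact abs_real_inner_le_norm _ _
            _ = f x^2 * (|4*s*γ1*ρf x*φf x| * ‖x - x₀‖) * ‖v‖ := by ring
      have hM := hMZ x hxc
      rw [Real.norm_eq_abs] at hM
      exact le_trans hb (le_trans (le_abs_self _) hM)
    · have : DZ x = 0 := hDZ0' x (fun h => hxc (subset_closure h))
      rw [this]
      simp only [norm_zero]
      obtain ⟨z, hz⟩ := hclne
      exact le_trans (norm_nonneg _) (hMZ z hz)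
  -- the operator
  set Pf : E3 → ℝ := fun x => (inner ℝ (γv x) (gradient f x) : ℝ) + γ0 x * f x with hPfdef
  have hPfc : ContinuousOn Pf (closure Ω) :=
    (hγc.inner hgradc.continuousOn).add (hγ0c.mul hfc.continuousOn)
  have hPffd : ∀ x, fderiv ℝ f x (γv x) = Pf x - γ0 x * f x := by
    intro x
    rw [hPfdef]
    simp only []
    rw [← hgradeq x]
    ring
  -- integrals
  have intOn : ∀ (h : E3 → ℝ), ContinuousOn h (closure Ω) → IntegrableOn h Ω volume :=
    fun h hc => (hc.integrableOn_compact hKcomp).mono_set subset_closure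
  set I : ℝ := ∫ x in Ω, φf x * f x^2 with hIdef
  set J : ℝ := ∫ x in Ω, φf x * Pf x^2 with hJdef
  set A : ℝ := ∫ x in Ω, 4*s*γ1*ρf x*φf x*g x^2*f x^2 with hAdef
  set B : ℝ := ∫ x in Ω, 2*φf x*f x*g x*Pf x with hBdef
  set C2 : ℝ := ∫ x in Ω, 2*φf x*γ0 x*g x*f x^2 with hC2def
  have iI : IntegrableOn (fun x => φf x * f x^2) Ω volume :=
    intOn _ (hφc.mul (hfc.pow 2)).continuousOn
  have iA : IntegrableOn (fun x => 4*s*γ1*ρf x*φf x*g x^2*f x^2) Ω volume :=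
    intOn _ (((((continuous_const.mul hρc).mul hφc).continuousOn).mul (hgc.pow 2)).mul
      (hfc.pow 2).continuousOn)
  have iB : IntegrableOn (fun x => 2*φf x*f x*g x*Pf x) Ω volume :=
    intOn _ (((((continuous_const.mul hφc).mul hfc).continuousOn).mul hgc).mul hPfc)
  have iC2 : IntegrableOn (fun x => 2*φf x*γ0 x*g x*f x^2) Ω volume :=
    intOn _ (((((continuous_const.mul hφc).continuousOn.mul hγ0c)).mul hgc).mul
      (hfc.pow 2).continuousOn)
  have iJ : IntegrableOn (fun x => φf x * Pf x^2) Ω volume :=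
    intOn _ (hφc.continuousOn.mul (hPfc.pow 2))
  have hI0 : 0 ≤ I := by
    rw [hIdef]
    apply setIntegral_nonneg hΩm
    intro x _
    positivity
  -- ∫ |Z| = I
  have hIZ : ∫ x, |Z x| = I := by
    have h1 : ∀ x, |Z x| = Z x := by
      intro x
      apply abs_of_nonneg
      rw [hZdef]
      simp only []
      apply mul_nonneg (hφpos x).le
      rw [hWdef]
      exact Set.indicator_nonneg (fun y _ => sq_nonneg _) x
    rw [show (fun x => |Z x|) = Z from funext h1]
    rw [← setIntegral_eq_integral_of_forall_compl_eq_zero hZ0']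
    rw [hIdef]
    apply setIntegral_congr_fun hΩm
    intro x hx
    rw [hZdef]
    simp only []
    rw [hW_cl x (subset_closure hx)]
  -- the key integral bounds from key_ibp
  have hSi : ∀ i : Fin 3, |∫ x in Ω, ut i x * DZ x (EuclideanSpace.single i 1)| ≤ Lu * I := by
    intro i
    have hv1 : ‖(EuclideanSpace.single i (1:ℝ) : E3)‖ ≤ 1 := by
      rw [EuclideanSpace.norm_single]
      simp
    have hkey := key_ibp (ut i) Ku.toNNReal (hutl i) Z DZ hZD MZ hMZb hZsupp
      (EuclideanSpace.single i 1) hv1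
    rw [hIZ] at hkey
    rw [setIntegral_eq_integral_of_forall_compl_eq_zero
      (fun x hx => by rw [hDZ0' x hx]; simp)]
    exact hkey
  -- integrability of the summands
  have iS : ∀ i : Fin 3, IntegrableOn (fun x => ut i x * DZ x (EuclideanSpace.single i 1)) Ω volume := by
    intro i
    have hrepc : ContinuousOn (fun x => ut i x * (φf x * (2*f x * fderiv ℝ f x (EuclideanSpace.single i 1))
        + f x^2 * ((4*s*γ1*ρf x*φf x) * (inner ℝ (x - x₀) (EuclideanSpace.single i 1) : ℝ)))) (closure Ω) := by
      apply ContinuousOn.mul ((hutl i).continuous.continuousOn)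
      apply Continuous.continuousOn
      apply Continuous.add
      · exact hφc.mul ((continuous_const.mul hfc).mul (hfdc.clm_apply continuous_const))
      · exact (hfc.pow 2).mul (((continuous_const.mul hρc).mul hφc).mul
          ((continuous_id.sub continuous_const).inner continuous_const))
    apply IntegrableOn.congr_fun (intOn _ hrepc) _ hΩm
    intro x hx
    simp only []
    rw [hDZapply x (subset_closure hx)]
  -- the divergence-type identity
  have hkeysum : A + B - C2 = ∑ i, ∫ x in Ω, ut i x * DZ x (EuclideanSpace.single i 1) := by
    have hsum : ∑ i, ∫ x in Ω, ut i x * DZ x (EuclideanSpace.single i 1)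
        = ∫ x in Ω, ∑ i, ut i x * DZ x (EuclideanSpace.single i 1) :=
      (integral_finset_sum Finset.univ (fun i _ => iS i)).symm
    rw [hsum]
    have hptws : ∀ x ∈ Ω, (∑ i, ut i x * DZ x (EuclideanSpace.single i 1))
        = 4*s*γ1*ρf x*φf x*g x^2*f x^2 + 2*φf x*f x*g x*Pf x - 2*φf x*γ0 x*g x*f x^2 := by
      intro x hx
      have hxc : x ∈ closure Ω := subset_closure hx
      have hterm : ∀ i : Fin 3, ut i x * DZ x (EuclideanSpace.single i 1)
          = (φf x * (2*f x) * g x) * (γv x i * fderiv ℝ f x (EuclideanSpace.single i 1))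
            + (f x^2 * (4*s*γ1*ρf x*φf x) * g x) *
              (γv x i * (inner ℝ (x - x₀) (EuclideanSpace.single i 1) : ℝ)) := by
        intro i
        rw [← hute i hxc]
        simp only []
        rw [hDZapply x hxc]
        ring
      rw [Finset.sum_congr rfl (fun i _ => hterm i)]
      rw [Finset.sum_add_distrib, ← Finset.mul_sum, ← Finset.mul_sum]
      have he1 : (∑ i, γv x i * fderiv ℝ f x (EuclideanSpace.single i 1)) = fderiv ℝ f x (γv x) :=
        sum_basis_apply (fderiv ℝ f x) (γv x)
      have he2 : (∑ i, γv x i * (inner ℝ (x - x₀) (EuclideanSpace.single i 1) : ℝ))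
          = (inner ℝ (x - x₀) (γv x) : ℝ) := by
        have h6 := sum_basis_apply (innerSL ℝ (x - x₀)) (γv x)
        simp only [innerSL_apply_apply] at h6
        exact h6
      rw [he1, he2]
      have he3 : (inner ℝ (x - x₀) (γv x) : ℝ) = g x := by
        rw [hgdef]
        exact real_inner_comm _ _
      rw [he3, hPffd x]
      ring
    rw [setIntegral_congr_fun hΩm hptws]
    have h7 : ∫ x in Ω, (4*s*γ1*ρf x*φf x*g x^2*f x^2 + 2*φf x*f x*g x*Pf x
        - 2*φf x*γ0 x*g x*f x^2)
        = (∫ x in Ω, (4*s*γ1*ρf x*φf x*g x^2*f x^2 + 2*φf x*f x*g x*Pf x))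
          - ∫ x in Ω, 2*φf x*γ0 x*g x*f x^2 := integral_sub (iA.add iB) iC2
    have h8 : ∫ x in Ω, (4*s*γ1*ρf x*φf x*g x^2*f x^2 + 2*φf x*f x*g x*Pf x)
        = (∫ x in Ω, 4*s*γ1*ρf x*φf x*g x^2*f x^2) + ∫ x in Ω, 2*φf x*f x*g x*Pf x :=
      integral_add iA iB
    rw [h7, h8, hAdef, hBdef, hC2def]
  -- lower bound for A
  have hA_lb : s*κ*I ≤ A := by
    rw [hIdef, hAdef, ← integral_const_mul]
    apply setIntegral_mono_on (iI.const_mul _) iA hΩm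
    intro x hx
    have hxc : x ∈ closure Ω := subset_closure hx
    have h1 : c0^2 ≤ g x^2 := by
      have := hnc x hxc
      nlinarith [sq_abs (g x), abs_nonneg (g x)]
    have h2 : ρmin * c0^2 ≤ ρf x * g x^2 :=
      mul_le_mul (hρmin_le x) h1 (sq_nonneg c0) (hρpos x).le
    have hfac : 0 ≤ 4*s*γ1*(φf x*f x^2) := by positivity
    calc s*κ*(φf x*f x^2) = 4*s*γ1*(φf x*f x^2)*(ρmin*c0^2) := by rw [hκdef]; ring
      _ ≤ 4*s*γ1*(φf x*f x^2)*(ρf x*g x^2) := mul_le_mul_of_nonneg_left h2 hfac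
      _ = 4*s*γ1*ρf x*φf x*g x^2*f x^2 := by ring
  -- upper bound for |B|
  have hB_ub : |B| ≤ s*θ*G^2*I + (1/(s*θ))*J := by
    have hsθ : 0 < s*θ := mul_pos hspos hθpos
    have habs : |B| ≤ ∫ x in Ω, |2*φf x*f x*g x*Pf x| := by
      rw [hBdef]
      have h := norm_integral_le_integral_norm (μ := volume.restrict Ω)
        (fun x => 2*φf x*f x*g x*Pf x)
      simp only [Real.norm_eq_abs] at h
      exact h
    refine le_trans habs ?_
    have hmono : ∫ x in Ω, |2*φf x*f x*g x*Pf x|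
        ≤ ∫ x in Ω, (s*θ*G^2*(φf x*f x^2) + (1/(s*θ))*(φf x*Pf x^2)) := by
      apply setIntegral_mono_on iB.abs ((iI.const_mul _).add (iJ.const_mul _)) hΩm
      intro x hx
      have hxc : x ∈ closure Ω := subset_closure hx
      have hamgm := amgm_aux (f x * g x) (Pf x) (s*θ) hsθ
      have hgG : (f x * g x)^2 ≤ G^2 * f x^2 := by
        have h1 : g x^2 ≤ G^2 := by
          have := hGabs x hxc
          nlinarith [sq_abs (g x), abs_nonneg (g x)]
        nlinarith [sq_nonneg (f x)]
      have h1 : |2*φf x*f x*g x*Pf x| = φf x * (2 * |f x * g x| * |Pf x|) := by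
        rw [abs_mul, abs_mul, abs_mul, abs_mul]
        rw [abs_two, abs_of_pos (hφpos x), abs_mul]
        ring
      rw [h1]
      calc φf x * (2 * |f x * g x| * |Pf x|) ≤ φf x * (s*θ*(f x * g x)^2 + Pf x^2/(s*θ)) :=
            mul_le_mul_of_nonneg_left hamgm (hφpos x).le
        _ ≤ φf x * (s*θ*(G^2*f x^2) + Pf x^2/(s*θ)) := by
            apply mul_le_mul_of_nonneg_left _ (hφpos x).le
            apply add_le_add_left
            exact mul_le_mul_of_nonneg_left hgG hsθ.le
        _ = s*θ*G^2*(φf x*f x^2) + (1/(s*θ))*(φf x*Pf x^2) := by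
            field_simp
    refine le_trans hmono ?_
    rw [integral_add (iI.const_mul _) (iJ.const_mul _), integral_const_mul, integral_const_mul]
  -- upper bound for |C2|
  have hC2_ub : |C2| ≤ 2*Γ0*G*I := by
    have habs : |C2| ≤ ∫ x in Ω, |2*φf x*γ0 x*g x*f x^2| := by
      rw [hC2def]
      have h := norm_integral_le_integral_norm (μ := volume.restrict Ω)
        (fun x => 2*φf x*γ0 x*g x*f x^2)
      simp only [Real.norm_eq_abs] at h
      exact h
    refine le_trans habs ?_
    have hmono : ∫ x in Ω, |2*φf x*γ0 x*g x*f x^2| ≤ ∫ x in Ω, 2*Γ0*G*(φf x*f x^2) := by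
      apply setIntegral_mono_on iC2.abs (iI.const_mul _) hΩm
      intro x hx
      have hxc : x ∈ closure Ω := subset_closure hx
      have h1 : |2*φf x*γ0 x*g x*f x^2| = 2*φf x*(|γ0 x| * |g x|)*f x^2 := by
        rw [abs_mul, abs_mul, abs_mul, abs_mul, abs_two, abs_of_pos (hφpos x),
          abs_of_nonneg (sq_nonneg (f x))]
        ring
      rw [h1]
      have h2 : |γ0 x| * |g x| ≤ Γ0 * G :=
        mul_le_mul (hΓ0abs x hxc) (hGabs x hxc) (abs_nonneg _) hΓ0n
      calc 2*φf x*(|γ0 x| * |g x|)*f x^2 ≤ 2*φf x*(Γ0*G)*f x^2 := by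
            apply mul_le_mul_of_nonneg_right _ (sq_nonneg _)
            apply mul_le_mul_of_nonneg_left h2 (by positivity)
        _ = 2*Γ0*G*(φf x*f x^2) := by ring
    refine le_trans hmono ?_
    rw [integral_const_mul, hIdef]
  -- the sum bound
  have hS_ub : |∑ i, ∫ x in Ω, ut i x * DZ x (EuclideanSpace.single i 1)| ≤ 3*(Lu*I) := by
    refine le_trans (Finset.abs_sum_le_sum_abs _ _) ?_
    refine le_trans (Finset.sum_le_sum (fun i _ => hSi i)) ?_
    rw [Finset.sum_const, Finset.card_univ, Fintype.card_fin]
    simp [nsmul_eq_mul]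
  -- combine
  have hchain : s*κ*I ≤ 3*(Lu*I) + (s*θ*G^2*I + (1/(s*θ))*J) + 2*Γ0*G*I := by
    have h1 : A ≤ |∑ i, ∫ x in Ω, ut i x * DZ x (EuclideanSpace.single i 1)| + |B| + |C2| := by
      have := hkeysum
      have hb1 : ∑ i, ∫ x in Ω, ut i x * DZ x (EuclideanSpace.single i 1)
          ≤ |∑ i, ∫ x in Ω, ut i x * DZ x (EuclideanSpace.single i 1)| := le_abs_self _
      linarith [le_abs_self B, neg_abs_le B, le_abs_self C2, neg_abs_le C2]
    linarith [hA_lb, hS_ub, hB_ub, hC2_ub]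
  have hθG : s*θ*G^2 = s*κ/2 := by
    rw [hθdef]
    field_simp
  have hstep : (s*κ/4)*I ≤ (1/(s*θ))*J := by
    have h1 : (s*κ - s*κ/2 - (3*Lu + 2*Γ0*G))*I ≤ (1/(s*θ))*J := by
      have := hchain
      rw [hθG] at this
      nlinarith [this]
    have h2 : (s*κ/4) ≤ s*κ - s*κ/2 - (3*Lu + 2*Γ0*G) := by
      have : s*κ/4 ≥ 3*Lu + 2*Γ0*G := hs2
      linarith
    calc (s*κ/4)*I ≤ (s*κ - s*κ/2 - (3*Lu + 2*Γ0*G))*I := mul_le_mul_of_nonneg_right h2 hI0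
      _ ≤ (1/(s*θ))*J := h1
  have hfinal : s^2*I ≤ (4/(κ*θ))*J := by
    have hpos : (0:ℝ) < 4*s/κ := by positivity
    have hmul := mul_le_mul_of_nonneg_left hstep hpos.le
    have e1 : 4*s/κ*((s*κ/4)*I) = s^2*I := by field_simp
    have e2 : 4*s/κ*((1/(s*θ))*J) = 4/(κ*θ)*J := by
      field_simp
    rw [e1, e2] at hmul
    exact hmul
  -- convert the goal
  have hIgoal : (∫ x in Ω, Real.exp (2 * s * Real.exp (γ1 * (‖x - x₀‖ ^ 2 + β * M))) * |f x| ^ 2) = I := by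
    rw [hIdef]
    apply setIntegral_congr_fun hΩm
    intro x _
    rw [hφf, hρf]
    simp only []
    rw [sq_abs]
  have hJgoal : (∫ x in Ω, Real.exp (2 * s * Real.exp (γ1 * (‖x - x₀‖ ^ 2 + β * M))) *
      |(inner ℝ (γv x) (gradient f x) : ℝ) + γ0 x * f x| ^ 2) = J := by
    rw [hJdef]
    apply setIntegral_congr_fun hΩm
    intro x _
    rw [hφf, hρf, hPfdef]
    simp only []
    rw [sq_abs]
  rw [hIgoal, hJgoal]
  exact hfinal
end
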